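/- arXiv:1511.06468 — 13 statements merged into one kernel-verified Lean document; each statement's English description precedes it below -/
import Mathlib

section
/- Let ε ∈ (0, 1/2] and μ = ε/(4 log(nm/ε)). Suppose x* ∈ ℝⁿ satisfies x* ≥ 0, Ax* ≤ 1, and 1ᵀx* = opt, and suppose opt ≥ 1. Let u* = (1 − ε/2)x*. Then f_μ(u*) ≤ −(1 − ε)·opt. -/
/-- The smoothed packing objective `f_μ(x) = −∑ᵢ xᵢ + μ ∑ⱼ exp((1/μ)((Ax)ⱼ − 1))`. -/
noncomputable def fmu {m n : ℕ} (A : Matrix (Fin m) (Fin n) ℝ) (μ : ℝ) (x : Fin n → ℝ) : ℝ :=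
  -(∑ i, x i) + μ * ∑ j, Real.exp ((1 / μ) * (A.mulVec x j - 1))

set_option maxHeartbeats 1000000 in
/-- With `ε ∈ (0,1/2]`, `μ = ε/(4 log(nm/ε))`, an optimal solution `x*` of the
packing LP with value `opt ≥ 1`, and `u* = (1 − ε/2)x*`, one has `f_μ(u*) ≤ −(1 − ε)·opt`. -/
theorem fmu_at_ustar (m n : ℕ) (hm : 0 < m) (hn : 0 < n)
    (A : Matrix (Fin m) (Fin n) ℝ) (hA : ∀ j i, 0 ≤ A j i)
    (ε : ℝ) (hε : ε ∈ Set.Ioc (0 : ℝ) (1 / 2))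
    (μ : ℝ) (hμ : μ = ε / (4 * Real.log ((n : ℝ) * m / ε)))
    (opt : ℝ)
    (hopt : IsLUB {v : ℝ | ∃ x : Fin n → ℝ,
        (∀ i, 0 ≤ x i) ∧ (∀ j, A.mulVec x j ≤ 1) ∧ v = ∑ i, x i} opt)
    (hopt1 : 1 ≤ opt)
    (xstar : Fin n → ℝ) (hx1 : ∀ i, 0 ≤ xstar i) (hx2 : ∀ j, A.mulVec xstar j ≤ 1)
    (hx3 : ∑ i, xstar i = opt) :
    fmu A μ (fun i => (1 - ε / 2) * xstar i) ≤ -(1 - ε) * opt := by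
  obtain ⟨hε0, hε2⟩ := hε
  have hn1 : (1:ℝ) ≤ n := by exact_mod_cast hn
  have hm1 : (1:ℝ) ≤ m := by exact_mod_cast hm
  set t : ℝ := (n:ℝ) * m / ε with ht
  have ht2 : (2:ℝ) ≤ t := by
    rw [ht, le_div_iff₀ hε0]; nlinarith
  have htpos : (0:ℝ) < t := by linarith
  set L : ℝ := Real.log t with hLdef
  have hL : Real.log 2 ≤ L := Real.log_le_log (by norm_num) ht2
  have hlog2 : (0.6931471803 : ℝ) < Real.log 2 := Real.log_two_gt_d9
  have hL2 : (1/2 : ℝ) < L := by linarith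
  have hμpos : 0 < μ := by rw [hμ]; apply div_pos hε0; linarith
  have hmul : ∀ j, A.mulVec (fun i => (1 - ε/2) * xstar i) j
      = (1 - ε/2) * A.mulVec xstar j := by
    intro j
    simp only [Matrix.mulVec, dotProduct, Finset.mul_sum]
    exact Finset.sum_congr rfl fun i _ => by ring
  have hexpL : Real.exp L = t := Real.exp_log htpos
  have hinv : Real.exp (-L) = ε / ((n:ℝ)*m) := by
    rw [Real.exp_neg, hexpL, ht, inv_div]
  have hkey : Real.exp (-(2*L)) = (ε/((n:ℝ)*m))^2 := by
    rw [show -(2*L) = -L + -L by ring, Real.exp_add, hinv]; ring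
  have hexp : ∀ j, Real.exp ((1/μ) * (A.mulVec (fun i => (1-ε/2)*xstar i) j - 1))
      ≤ (ε / ((n:ℝ)*m))^2 := by
    intro j
    have h1 : A.mulVec (fun i => (1-ε/2)*xstar i) j - 1 ≤ -(ε/2) := by
      rw [hmul j]; nlinarith [hx2 j]
    have heq : (1/μ) * (-(ε/2)) = -(2*L) := by
      rw [hμ]; field_simp; ring
    have h2 : (1/μ) * (A.mulVec (fun i => (1-ε/2)*xstar i) j - 1) ≤ -(2*L) := by
      calc (1/μ) * (A.mulVec (fun i => (1-ε/2)*xstar i) j - 1)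
          ≤ (1/μ) * (-(ε/2)) := by
            apply mul_le_mul_of_nonneg_left h1 (by positivity)
        _ = -(2*L) := heq
    calc Real.exp _ ≤ Real.exp (-(2*L)) := Real.exp_le_exp.mpr h2
      _ = (ε/((n:ℝ)*m))^2 := hkey
  have hsum : ∑ j, Real.exp ((1/μ) * (A.mulVec (fun i => (1-ε/2)*xstar i) j - 1))
      ≤ (m:ℝ) * (ε/((n:ℝ)*m))^2 := by
    calc ∑ j, Real.exp ((1/μ) * (A.mulVec (fun i => (1-ε/2)*xstar i) j - 1))
        ≤ ∑ _j : Fin m, (ε/((n:ℝ)*m))^2 :=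
          Finset.sum_le_sum fun j _ => hexp j
      _ = (m:ℝ) * (ε/((n:ℝ)*m))^2 := by
          simp [Finset.sum_const, nsmul_eq_mul]
  have hLne : L ≠ 0 := by linarith
  have hnne : ((n:ℝ)) ≠ 0 := by linarith
  have hmne : ((m:ℝ)) ≠ 0 := by linarith
  have hεne : ε ≠ 0 := ne_of_gt hε0
  have hexpand : μ * ((m:ℝ) * (ε/((n:ℝ)*m))^2) = ε^3 / (4*L*((n:ℝ)^2*m)) := by
    rw [hμ]; field_simp
  have hn2m : (1:ℝ) ≤ (n:ℝ)^2 * m := by nlinarith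
  have h3 : μ * ((m:ℝ) * (ε/((n:ℝ)*m))^2) ≤ ε/2 := by
    rw [hexpand, div_le_iff₀ (by positivity)]
    nlinarith [mul_le_mul hL2.le hn2m (by norm_num : (0:ℝ) ≤ 1) (by linarith : (0:ℝ) ≤ L),
      sq_nonneg ε]
  have h2 : μ * ∑ j, Real.exp ((1/μ) * (A.mulVec (fun i => (1-ε/2)*xstar i) j - 1))
      ≤ ε/2 := le_trans (mul_le_mul_of_nonneg_left hsum hμpos.le) h3
  have h1 : ∑ i, (1 - ε/2) * xstar i = (1 - ε/2) * opt := by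
    rw [← Finset.mul_sum, hx3]
  unfold fmu
  rw [h1]
  have hfin : -((1 - ε/2)*opt) + ε/2 ≤ -(1-ε)*opt := by nlinarith
  linarith [h2, hfin]
end

section
/- Let ε ∈ (0, 1/2] and μ = ε/(4 log(nm/ε)), and suppose 1 ≤ opt ≤ n. Then for every x ∈ ℝⁿ with x ≥ 0, f_μ(x) ≥ −(1 + ε)·opt. -/
set_option maxHeartbeats 1000000 in
/-- With `ε ∈ (0,1/2]`, `μ = ε/(4 log(nm/ε))`, and `1 ≤ opt ≤ n`, for every
`x ≥ 0` one has `f_μ(x) ≥ −(1 + ε)·opt`. -/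
theorem fmu_lower_bound (m n : ℕ) (hm : 0 < m) (hn : 0 < n)
    (A : Matrix (Fin m) (Fin n) ℝ) (hA : ∀ j i, 0 ≤ A j i)
    (ε : ℝ) (hε : ε ∈ Set.Ioc (0 : ℝ) (1 / 2))
    (μ : ℝ) (hμ : μ = ε / (4 * Real.log ((n : ℝ) * m / ε)))
    (opt : ℝ)
    (hopt : IsLUB {v : ℝ | ∃ x : Fin n → ℝ,
        (∀ i, 0 ≤ x i) ∧ (∀ j, A.mulVec x j ≤ 1) ∧ v = ∑ i, x i} opt)
    (hopt1 : 1 ≤ opt) (hoptn : opt ≤ (n : ℝ)) :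
    ∀ x : Fin n → ℝ, (∀ i, 0 ≤ x i) → -(1 + ε) * opt ≤ fmu A μ x := by
  obtain ⟨hε0, hε2⟩ := hε
  set T : ℝ := (n : ℝ) * m / ε with hT
  have hn1 : (1:ℝ) ≤ n := by exact_mod_cast hn
  have hm1 : (1:ℝ) ≤ m := by exact_mod_cast hm
  have hnm : (1:ℝ) ≤ (n:ℝ) * m := by nlinarith
  have hT2 : (2:ℝ) ≤ T := by rw [hT, le_div_iff₀ hε0]; nlinarith
  have hL : 0 < Real.log T := Real.log_pos (by linarith)
  have hμ0 : 0 < μ := by rw [hμ]; positivity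
  have hεμ : ε / μ = 4 * Real.log T := by
    rw [hμ]; field_simp
  have hopt0 : (0:ℝ) < opt := by linarith
  have hnT : (n:ℝ) ≤ T := by rw [hT, le_div_iff₀ hε0]; nlinarith
  have hkey : opt ≤ Real.exp (ε / μ) := by
    rw [hεμ]
    calc opt = Real.exp (Real.log opt) := (Real.exp_log hopt0).symm
      _ ≤ Real.exp (4 * Real.log T) := by
          apply Real.exp_le_exp.2
          have h1 : Real.log opt ≤ Real.log T := Real.log_le_log hopt0 (by linarith)
          linarith
  intro x hx
  set S := ∑ i, x i with hS
  have hub : ∀ y : Fin n → ℝ, (∀ i, 0 ≤ y i) → (∀ j, A.mulVec y j ≤ 1) →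
      ∑ i, y i ≤ opt := fun y h1 h2 => hopt.1 ⟨y, h1, h2, rfl⟩
  have hexp_nonneg : 0 ≤ μ * ∑ j, Real.exp ((1 / μ) * (A.mulVec x j - 1)) := by positivity
  by_cases hcase : S ≤ (1 + ε) * opt
  · unfold fmu; rw [← hS]; nlinarith
  push_neg at hcase
  have hS0 : 0 < S := by nlinarith
  obtain ⟨j₀, -, hj₀⟩ := Finset.exists_max_image Finset.univ (fun j => A.mulVec x j)
    ⟨⟨0, hm⟩, Finset.mem_univ _⟩
  have hAx0 : ∀ j, 0 ≤ A.mulVec x j := by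
    intro j
    show 0 ≤ ∑ i, A j i * x i
    exact Finset.sum_nonneg fun i _ => mul_nonneg (hA j i) (hx i)
  have hjge : S / opt ≤ A.mulVec x j₀ := by
    by_contra hlt
    push_neg at hlt
    set c := A.mulVec x j₀ with hc
    rcases le_or_gt c 0 with hc0 | hc0
    · have hcz : c = 0 := le_antisymm hc0 (hAx0 j₀)
      have hfeas : ∀ j, A.mulVec ((2 * opt / S) • x) j ≤ 1 := by
        intro j
        have hz : A.mulVec x j = 0 :=
          le_antisymm (by simpa [← hc, hcz] using hj₀ j (Finset.mem_univ j)) (hAx0 j)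
        rw [Matrix.mulVec_smul, Pi.smul_apply, hz, smul_zero]
        norm_num
      have hle := hub ((2 * opt / S) • x)
        (fun i => mul_nonneg (by positivity) (hx i)) hfeas
      have hsum : ∑ i, ((2 * opt / S) • x) i = (2 * opt / S) * S := by
        simp only [Pi.smul_apply, smul_eq_mul, ← Finset.mul_sum, ← hS]
      rw [hsum] at hle
      rw [div_mul_cancel₀] at hle
      · linarith
      · exact ne_of_gt hS0
    · have hfeas : ∀ j, A.mulVec ((1 / c) • x) j ≤ 1 := by
        intro j
        rw [Matrix.mulVec_smul, Pi.smul_apply, smul_eq_mul, div_mul_eq_mul_div,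
          one_mul, div_le_one hc0]
        exact hj₀ j (Finset.mem_univ j)
      have hle := hub ((1 / c) • x)
        (fun i => mul_nonneg (by positivity) (hx i)) hfeas
      have hsum : ∑ i, ((1 / c) • x) i = (1 / c) * S := by
        simp only [Pi.smul_apply, smul_eq_mul, ← Finset.mul_sum, ← hS]
      rw [hsum] at hle
      have h1 : S ≤ opt * c := by
        rw [div_mul_eq_mul_div, one_mul, div_le_iff₀ hc0] at hle
        linarith [hle]
      have h2 : opt * c < S := by
        calc opt * c < opt * (S / opt) := mul_lt_mul_of_pos_left hlt hopt0
          _ = S := by field_simp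
      linarith
  -- main chain
  set b := (1 / μ) * (S / opt - 1 - ε) with hb
  have hb0 : 0 < b := by
    apply mul_pos (by positivity)
    have : (1 + ε) < S / opt := by
      rw [lt_div_iff₀ hopt0]; linarith [hcase]
    linarith
  have hsplit : (1 / μ) * (S / opt - 1) = ε / μ + b := by
    rw [hb]; field_simp; ring
  have hexpj : Real.exp ((1 / μ) * (S / opt - 1)) ≤
      Real.exp ((1 / μ) * (A.mulVec x j₀ - 1)) := by
    apply Real.exp_le_exp.2
    have := hjge
    nlinarith [hμ0]
  have hsingle : Real.exp ((1 / μ) * (A.mulVec x j₀ - 1)) ≤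
      ∑ j, Real.exp ((1 / μ) * (A.mulVec x j - 1)) :=
    Finset.single_le_sum (f := fun j => Real.exp ((1 / μ) * (A.mulVec x j - 1)))
      (fun j _ => (Real.exp_pos _).le) (Finset.mem_univ j₀)
  have hexpb : b ≤ Real.exp b := by linarith [Real.add_one_le_exp b]
  have hprod : opt * b ≤ Real.exp (ε / μ) * Real.exp b := by
    apply mul_le_mul hkey hexpb hb0.le (Real.exp_pos _).le
  have hval : μ * (opt * b) = S - opt - ε * opt := by
    rw [hb]; field_simp
  have hchain : S - (1 + ε) * opt ≤ μ * ∑ j, Real.exp ((1 / μ) * (A.mulVec x j - 1)) := by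
    have h1 : Real.exp (ε / μ) * Real.exp b = Real.exp ((1 / μ) * (S / opt - 1)) := by
      rw [hsplit, Real.exp_add]
    have h2 : μ * (opt * b) ≤ μ * ∑ j, Real.exp ((1 / μ) * (A.mulVec x j - 1)) := by
      apply mul_le_mul_of_nonneg_left _ hμ0.le
      calc opt * b ≤ Real.exp (ε / μ) * Real.exp b := hprod
        _ = Real.exp ((1 / μ) * (S / opt - 1)) := h1
        _ ≤ Real.exp ((1 / μ) * (A.mulVec x j₀ - 1)) := hexpj
        _ ≤ ∑ j, Real.exp ((1 / μ) * (A.mulVec x j - 1)) := hsingle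
    rw [hval] at h2
    linarith
  unfold fmu
  rw [← hS]
  linarith
end

section
/- Let ε ∈ (0, 1/2] and μ = ε/(4 log(nm/ε)), and suppose the minimum over columns i of ‖A_{:i}‖_∞ equals 1. Let x₀ ∈ ℝⁿ be defined by x₀[i] = (1 − ε/2)/(n·‖A_{:i}‖_∞) for each i. Then f_μ(x₀) ≤ −(1 − ε)/n. -/
/-- The max entry of column `i` of `A` (i.e. `‖A_{:i}‖_∞` for a nonnegative matrix). -/
noncomputable def colMax {m n : ℕ} (hm : 0 < m) (A : Matrix (Fin m) (Fin n) ℝ) (i : Fin n) : ℝ :=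
  Finset.univ.sup' ⟨⟨0, hm⟩, Finset.mem_univ _⟩ fun j : Fin m => A j i

set_option maxHeartbeats 1000000 in
/-- With `ε ∈ (0,1/2]`, `μ = ε/(4 log(nm/ε))`, and `minᵢ ‖A_{:i}‖_∞ = 1`, the point
`x₀` with `x₀[i] = (1 − ε/2)/(n‖A_{:i}‖_∞)` satisfies `f_μ(x₀) ≤ −(1 − ε)/n`. -/
theorem fmu_at_x0 (m n : ℕ) (hm : 0 < m) (hn : 0 < n)
    (A : Matrix (Fin m) (Fin n) ℝ) (hA : ∀ j i, 0 ≤ A j i)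
    (ε : ℝ) (hε : ε ∈ Set.Ioc (0 : ℝ) (1 / 2))
    (μ : ℝ) (hμ : μ = ε / (4 * Real.log ((n : ℝ) * m / ε)))
    (hmin : (Finset.univ.inf' ⟨⟨0, hn⟩, Finset.mem_univ _⟩ fun i : Fin n => colMax hm A i) = 1) :
    fmu A μ (fun i => (1 - ε / 2) / ((n : ℝ) * colMax hm A i)) ≤ -(1 - ε) / n := by
  obtain ⟨hε0, hε2⟩ := hε
  set M := colMax hm A with hMdef
  have hnR : (1:ℝ) ≤ n := by exact_mod_cast hn
  have hmR : (1:ℝ) ≤ m := by exact_mod_cast hm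
  have hn0 : (0:ℝ) < n := by linarith
  have hm0 : (0:ℝ) < m := by linarith
  have hM1 : ∀ i, 1 ≤ M i := by
    intro i
    rw [← hmin]
    exact Finset.inf'_le _ (Finset.mem_univ i)
  have hM0 : ∀ i, 0 < M i := fun i => lt_of_lt_of_le one_pos (hM1 i)
  have hAle : ∀ j i, A j i ≤ M i := fun j i => Finset.le_sup' (fun j' => A j' i) (Finset.mem_univ j)
  set L := Real.log ((n : ℝ) * m / ε) with hLdef
  have hq : (2:ℝ) ≤ (n:ℝ) * m / ε := by
    rw [le_div_iff₀ hε0]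
    nlinarith
  have hL2 : Real.log 2 ≤ L := Real.log_le_log (by norm_num) hq
  have hlog2 : (0.6931471803:ℝ) < Real.log 2 := Real.log_two_gt_d9
  have hLpos : (0:ℝ) < L := by linarith
  have hμ0 : 0 < μ := by rw [hμ]; positivity
  set c : ℝ := 1 - ε / 2 with hc
  have hc0 : 0 < c := by simp only [hc]; linarith
  set x0 : Fin n → ℝ := fun i => c / ((n : ℝ) * M i) with hx0
  -- bound on (A x₀)ⱼ
  have hAx : ∀ j, A.mulVec x0 j ≤ c := by
    intro j
    have hterm : ∀ i : Fin n, A j i * x0 i ≤ c / n := by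
      intro i
      have h1 : A j i * (c / ((n : ℝ) * M i)) ≤ M i * (c / ((n : ℝ) * M i)) :=
        mul_le_mul_of_nonneg_right (hAle j i)
          (le_of_lt (div_pos hc0 (mul_pos hn0 (hM0 i))))
      have h2 : M i * (c / ((n : ℝ) * M i)) = c / n := by
        have hMne : M i ≠ 0 := (hM0 i).ne'
        field_simp
      simpa [hx0, h2] using h1
    calc A.mulVec x0 j = ∑ i, A j i * x0 i := rfl
      _ ≤ ∑ _i : Fin n, c / n := Finset.sum_le_sum fun i _ => hterm i
      _ = c := by
          rw [Finset.sum_const, Finset.card_univ, Fintype.card_fin, nsmul_eq_mul]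
          field_simp
  -- bound on each exp term
  have hexpval : Real.exp (-(2 * L)) = (ε / ((n:ℝ) * m)) ^ 2 := by
    have hr : (0:ℝ) < (n:ℝ) * m / ε := by positivity
    have h2L : Real.exp (2 * L) = ((n:ℝ) * m / ε) ^ 2 := by
      rw [two_mul, Real.exp_add, Real.exp_log hr, sq]
    rw [Real.exp_neg, h2L]
    rw [div_pow, div_pow, inv_div]
  have hinvμ : 1 / μ = 4 * L / ε := by
    rw [hμ, one_div_div]
  have hexpbound : ∀ j, Real.exp ((1 / μ) * (A.mulVec x0 j - 1)) ≤ (ε / ((n:ℝ) * m)) ^ 2 := by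
    intro j
    rw [← hexpval]
    apply Real.exp_le_exp.mpr
    have h1 : A.mulVec x0 j - 1 ≤ -(ε / 2) := by
      have := hAx j; simp only [hc] at this ⊢; linarith
    have h2 : (1 / μ) * (A.mulVec x0 j - 1) ≤ (1 / μ) * (-(ε / 2)) :=
      mul_le_mul_of_nonneg_left h1 (by positivity)
    have h3 : (1 / μ) * (-(ε / 2)) = -(2 * L) := by
      rw [hinvμ]; field_simp; ring
    linarith [h2, h3.le]
  -- bound on the sum of exps
  have hsumexp : μ * ∑ j, Real.exp ((1 / μ) * (A.mulVec x0 j - 1))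
      ≤ μ * ((m:ℝ) * (ε / ((n:ℝ) * m)) ^ 2) := by
    apply mul_le_mul_of_nonneg_left _ hμ0.le
    calc ∑ j, Real.exp ((1 / μ) * (A.mulVec x0 j - 1))
        ≤ ∑ _j : Fin m, (ε / ((n:ℝ) * m)) ^ 2 := Finset.sum_le_sum fun j _ => hexpbound j
      _ = (m:ℝ) * (ε / ((n:ℝ) * m)) ^ 2 := by
          rw [Finset.sum_const, Finset.card_univ, Fintype.card_fin, nsmul_eq_mul]
  -- lower bound on sum of x₀
  have hsumx : c / n ≤ ∑ i, x0 i := by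
    obtain ⟨i₀, _, hi₀⟩ := Finset.exists_mem_eq_inf' (⟨⟨0, hn⟩, Finset.mem_univ _⟩ :
      (Finset.univ : Finset (Fin n)).Nonempty) fun i : Fin n => colMax hm A i
    have hMi₀ : M i₀ = 1 := by rw [hMdef, ← hi₀, hmin]
    have hx0i₀ : x0 i₀ = c / n := by rw [hx0]; simp [hMi₀]
    calc c / n = x0 i₀ := hx0i₀.symm
      _ ≤ ∑ i, x0 i := Finset.single_le_sum
          (fun i _ => le_of_lt (div_pos hc0 (mul_pos hn0 (hM0 i)))) (Finset.mem_univ i₀)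
  -- final arithmetic
  have hμε : μ ≤ ε := by
    rw [hμ, div_le_iff₀ (by positivity)]
    nlinarith
  have hkey : μ * ((m:ℝ) * (ε / ((n:ℝ) * m)) ^ 2) ≤ ε / (2 * n) := by
    have hfrac : (m:ℝ) * (ε / ((n:ℝ) * m)) ^ 2 = ε ^ 2 / ((n:ℝ) ^ 2 * m) := by
      rw [div_pow]
      field_simp
    rw [hfrac, ← mul_div_assoc, div_le_div_iff₀ (by positivity) (by positivity)]
    have h1 : μ * (ε ^ 2 * (2 * n)) ≤ ε * (ε ^ 2 * (2 * n)) :=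
      mul_le_mul_of_nonneg_right hμε (by positivity)
    have h2 : ε ^ 2 ≤ 1 / 4 := by nlinarith
    have h3 : (n:ℝ) ≤ (n:ℝ) ^ 2 * m := by nlinarith
    have h4 : ε * ε ^ 2 ≤ ε * (1 / 4) := mul_le_mul_of_nonneg_left h2 hε0.le
    have h5 : ε * (n:ℝ) ≤ ε * ((n:ℝ) ^ 2 * m) := mul_le_mul_of_nonneg_left h3 hε0.le
    have h6 : ε * ε ^ 2 * (2 * (n:ℝ)) ≤ ε * (1 / 4) * (2 * (n:ℝ)) :=
      mul_le_mul_of_nonneg_right h4 (by positivity)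
    have h7 : 0 < ε * (n:ℝ) := mul_pos hε0 hn0
    linarith only [h1, h5, h6, h7]
  have hgoal : -(∑ i, x0 i) + μ * ∑ j, Real.exp ((1 / μ) * (A.mulVec x0 j - 1))
      ≤ -(1 - ε) / n := by
    have h1 : -(∑ i, x0 i) ≤ -(c / n) := by linarith
    have h2 : -(c / n) + ε / (2 * n) = -(1 - ε) / n := by
      simp only [hc]; field_simp; ring
    linarith
  simpa [fmu, hx0, hMdef] using hgoal
end

section
/- Let ε ∈ (0, 1/2] and μ = ε/(4 log(nm/ε)), and suppose 1 ≤ opt ≤ n. Then for every x ∈ ℝⁿ with x ≥ 0 satisfying f_μ(x) ≤ 0, one has Ax ≤ (1 + ε)·1 and 1ᵀx ≤ (1 + ε)·opt. -/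
set_option maxHeartbeats 1000000 in
/-- With `ε ∈ (0,1/2]`, `μ = ε/(4 log(nm/ε))`, and `1 ≤ opt ≤ n`, every `x ≥ 0`
with `f_μ(x) ≤ 0` satisfies `Ax ≤ (1 + ε)·1` and `1ᵀx ≤ (1 + ε)·opt`. -/
theorem fmu_nonpos_approx_feasible (m n : ℕ) (hm : 0 < m) (hn : 0 < n)
    (A : Matrix (Fin m) (Fin n) ℝ) (hA : ∀ j i, 0 ≤ A j i)
    (ε : ℝ) (hε : ε ∈ Set.Ioc (0 : ℝ) (1 / 2))
    (μ : ℝ) (hμ : μ = ε / (4 * Real.log ((n : ℝ) * m / ε)))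
    (opt : ℝ)
    (hopt : IsLUB {v : ℝ | ∃ x : Fin n → ℝ,
        (∀ i, 0 ≤ x i) ∧ (∀ j, A.mulVec x j ≤ 1) ∧ v = ∑ i, x i} opt)
    (hopt1 : 1 ≤ opt) (hoptn : opt ≤ (n : ℝ)) :
    ∀ x : Fin n → ℝ, (∀ i, 0 ≤ x i) → fmu A μ x ≤ 0 →
      (∀ j, A.mulVec x j ≤ 1 + ε) ∧ (∑ i, x i) ≤ (1 + ε) * opt := by
  obtain ⟨hε0, hε2⟩ := hε
  intro x hx hf
  have hn1 : (1:ℝ) ≤ n := by exact_mod_cast hn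
  have hm1 : (1:ℝ) ≤ m := by exact_mod_cast hm
  set y : ℝ := (n:ℝ) * m / ε with hy
  have hy2 : (2:ℝ) ≤ y := by
    rw [hy, le_div_iff₀ hε0]
    nlinarith
  have hypos : (0:ℝ) < y := by linarith
  set L : ℝ := Real.log y with hLdef
  clear_value L
  have hLpos : 0 < L := by rw [hLdef]; exact Real.log_pos (by linarith)
  have hL2 : Real.log 2 ≤ L := by rw [hLdef]; exact Real.log_le_log (by norm_num) hy2
  have hμpos : 0 < μ := by rw [hμ]; exact div_pos hε0 (by linarith)
  have hμ1 : μ ≤ 1 := by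
    rw [hμ, div_le_one (by linarith)]
    have h2 := Real.log_two_gt_d9
    linarith
  have hεμ : ε / μ = 4 * L := by
    rw [hμ]
    field_simp
  have hexp4 : Real.exp (ε / μ) = y ^ 4 := by
    rw [hεμ, show (4:ℝ) * L = L + L + (L + L) by ring, Real.exp_add, Real.exp_add,
      hLdef, Real.exp_log hypos]
    ring
  have hεy : ε * y = (n:ℝ) * m := by
    rw [hy]; field_simp
  have hlog : L ≤ y / 2 := by
    have hsq : Real.sqrt y ^ 2 = y := Real.sq_sqrt hypos.le
    have h1 : Real.log (Real.sqrt y) ≤ Real.sqrt y - 1 :=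
      Real.log_le_sub_one_of_pos (Real.sqrt_pos.mpr hypos)
    have h2 : L = 2 * Real.log (Real.sqrt y) := by
      rw [hLdef, Real.log_sqrt hypos.le]; ring
    nlinarith [Real.sqrt_nonneg y, sq_nonneg (Real.sqrt y - 2)]
  -- key: (1+ε)*n ≤ μ * exp(ε/μ)
  have hkey : (1 + ε) * n ≤ μ * Real.exp (ε / μ) := by
    rw [hexp4, hμ, div_mul_eq_mul_div, le_div_iff₀ (by linarith : (0:ℝ) < 4 * L)]
    have h3 : 4 * (1 + ε) * L ≤ 3 * y := by nlinarith
    have h4 : 3 * y ≤ y ^ 3 := by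
      have ha : y * 2 ≤ y * y := mul_le_mul_of_nonneg_left hy2 hypos.le
      have hb : (y * y) * 2 ≤ (y * y) * y :=
        mul_le_mul_of_nonneg_left hy2 (mul_nonneg hypos.le hypos.le)
      nlinarith
    have h34 : 4 * (1 + ε) * L ≤ y ^ 3 := h3.trans h4
    have hn0 : (0:ℝ) ≤ (n:ℝ) := by linarith
    have h5 : (n:ℝ) * (y ^ 3) ≤ ((n:ℝ) * m) * y ^ 3 := by
      have hy3 : (0:ℝ) ≤ y ^ 3 := by positivity
      nlinarith [mul_nonneg (mul_nonneg hn0 (by linarith : (0:ℝ) ≤ (m:ℝ) - 1)) hy3]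
    have h6 : ε * y ^ 4 = (ε * y) * y ^ 3 := by ring
    rw [h6, hεy]
    calc (1 + ε) * n * (4 * L) = (n:ℝ) * (4 * (1 + ε) * L) := by ring
      _ ≤ (n:ℝ) * y ^ 3 := mul_le_mul_of_nonneg_left h34 hn0
      _ ≤ (n:ℝ) * m * y ^ 3 := h5
  -- sum nonneg
  set s : ℝ := ∑ i, x i with hs
  clear_value s
  -- scaling lemma
  have hscale : ∀ c : ℝ, 0 < c → (∀ j, A.mulVec x j ≤ c) → s ≤ c * opt := by
    intro c hc hcle
    have hmem : s / c ∈ {v : ℝ | ∃ x : Fin n → ℝ,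
        (∀ i, 0 ≤ x i) ∧ (∀ j, A.mulVec x j ≤ 1) ∧ v = ∑ i, x i} := by
      refine ⟨fun i => x i / c, fun i => div_nonneg (hx i) hc.le, fun j => ?_, ?_⟩
      · have hmv : A.mulVec (fun i => x i / c) j = A.mulVec x j / c := by
          simp only [Matrix.mulVec, dotProduct, Finset.sum_div, mul_div_assoc]
        rw [hmv, div_le_one hc]
        exact hcle j
      · rw [hs, Finset.sum_div]
    have hle : s / c ≤ opt := hopt.1 hmem
    calc s = (s / c) * c := by field_simp
      _ ≤ opt * c := mul_le_mul_of_nonneg_right hle hc.le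
      _ = c * opt := mul_comm _ _
  -- argmax over j
  haveI : Nonempty (Fin m) := ⟨⟨0, hm⟩⟩
  obtain ⟨j0, -, hj0⟩ := Finset.exists_mem_eq_sup' (Finset.univ_nonempty (α := Fin m))
    (fun j => A.mulVec x j)
  have hmax : ∀ j, A.mulVec x j ≤ A.mulVec x j0 := fun j => by
    rw [← hj0]; exact Finset.le_sup' _ (Finset.mem_univ j)
  by_cases hcase : A.mulVec x j0 ≤ 1 + ε
  · refine ⟨fun j => (hmax j).trans hcase, ?_⟩
    exact hscale (1 + ε) (by linarith) fun j => (hmax j).trans hcase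
  · exfalso
    push_neg at hcase
    set lam : ℝ := A.mulVec x j0 with hlam
    clear_value lam
    -- from fmu ≤ 0
    have hf' : μ * ∑ j, Real.exp ((1 / μ) * (A.mulVec x j - 1)) ≤ s := by
      have := hf
      unfold fmu at this
      linarith
    have hEsum : Real.exp ((1 / μ) * (lam - 1)) ≤
        ∑ j, Real.exp ((1 / μ) * (A.mulVec x j - 1)) := by
      rw [hlam]
      exact Finset.single_le_sum
        (f := fun j => Real.exp ((1 / μ) * (A.mulVec x j - 1)))
        (fun j _ => (Real.exp_pos _).le) (Finset.mem_univ j0)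
    have h1 : μ * Real.exp ((1 / μ) * (lam - 1)) ≤ s := by
      have := mul_le_mul_of_nonneg_left hEsum hμpos.le
      linarith
    have h2 : s ≤ lam * opt := hscale lam (by linarith) hmax
    have h3 : lam * opt ≤ lam * n := mul_le_mul_of_nonneg_left hoptn (by linarith)
    -- lower bound on the exponential
    set t : ℝ := lam - 1 - ε with ht
    clear_value t
    have htpos : 0 < t := by rw [ht]; linarith
    have hsplit : (1 / μ) * (lam - 1) = ε / μ + t / μ := by
      rw [ht]; field_simp; ring
    have hdiv : t ≤ t / μ := by
      rw [le_div_iff₀ hμpos]; nlinarith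
    have hexpge : 1 + t ≤ Real.exp (t / μ) := by
      have := Real.add_one_le_exp (t / μ)
      linarith
    have hmul : μ * Real.exp ((1 / μ) * (lam - 1)) =
        (μ * Real.exp (ε / μ)) * Real.exp (t / μ) := by
      rw [hsplit, Real.exp_add]; ring
    have hlow : (1 + ε) * n * (1 + t) ≤ μ * Real.exp ((1 / μ) * (lam - 1)) := by
      rw [hmul]
      have hpos : (0:ℝ) ≤ 1 + t := by linarith
      have h := mul_le_mul hkey hexpge hpos (by positivity)
      linarith [h]
    have hstrict : lam * n < (1 + ε) * n * (1 + t) := by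
      have hl : lam = 1 + ε + t := by rw [ht]; ring
      have hεtn : 0 < ε * t * (n:ℝ) := by
        have hnp : (0:ℝ) < n := by linarith
        positivity
      rw [hl]
      nlinarith [hεtn]
    linarith
end

section
/- Let ε ∈ (0, 1/2] and μ = ε/(4 log(nm/ε)), and suppose 1 ≤ opt ≤ n. Let δ ∈ [0, 1). Then for every x ∈ ℝⁿ with x ≥ 0 satisfying f_μ(x) ≤ −(1 − δ)·opt, the vector x/(1 + ε) is feasible for the packing LP (i.e., A(x/(1+ε)) ≤ 1 and x/(1+ε) ≥ 0) and satisfies 1ᵀ(x/(1+ε)) ≥ ((1 − δ)/(1 + ε))·opt. -/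
set_option maxHeartbeats 1600000 in
/-- With `ε ∈ (0,1/2]`, `μ = ε/(4 log(nm/ε))`, `1 ≤ opt ≤ n`, and `δ ∈ [0,1)`,
every `x ≥ 0` with `f_μ(x) ≤ −(1 − δ)·opt` gives a feasible point `x/(1+ε)` of the packing LP
with objective value at least `((1 − δ)/(1 + ε))·opt`. -/
theorem fmu_small_gives_approx_solution (m n : ℕ) (hm : 0 < m) (hn : 0 < n)
    (A : Matrix (Fin m) (Fin n) ℝ) (hA : ∀ j i, 0 ≤ A j i)
    (ε : ℝ) (hε : ε ∈ Set.Ioc (0 : ℝ) (1 / 2))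
    (μ : ℝ) (hμ : μ = ε / (4 * Real.log ((n : ℝ) * m / ε)))
    (opt : ℝ)
    (hopt : IsLUB {v : ℝ | ∃ x : Fin n → ℝ,
        (∀ i, 0 ≤ x i) ∧ (∀ j, A.mulVec x j ≤ 1) ∧ v = ∑ i, x i} opt)
    (hopt1 : 1 ≤ opt) (hoptn : opt ≤ (n : ℝ))
    (δ : ℝ) (hδ : δ ∈ Set.Ico (0 : ℝ) 1) :
    ∀ x : Fin n → ℝ, (∀ i, 0 ≤ x i) → fmu A μ x ≤ -(1 - δ) * opt →
      (∀ i, 0 ≤ x i / (1 + ε)) ∧ (∀ j, A.mulVec (fun i => x i / (1 + ε)) j ≤ 1) ∧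
        ((1 - δ) / (1 + ε)) * opt ≤ ∑ i, x i / (1 + ε) := by
  obtain ⟨hε0, hεhalf⟩ := hε
  obtain ⟨hδ0, hδ1⟩ := hδ
  have hn1 : (1:ℝ) ≤ (n:ℝ) := by exact_mod_cast hn
  have hm1 : (1:ℝ) ≤ (m:ℝ) := by exact_mod_cast hm
  set z : ℝ := (n:ℝ) * m / ε with hz_def
  have hz2 : (2:ℝ) ≤ z := by
    rw [hz_def, le_div_iff₀ hε0]; nlinarith
  set L : ℝ := Real.log z with hLdef
  have hL : 0 < L := Real.log_pos (by linarith)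
  have hμpos : 0 < μ := by rw [hμ]; positivity
  have hlog2L : Real.log 2 ≤ L := by
    rw [hLdef]; exact Real.log_le_log (by norm_num) hz2
  have hμ1 : μ ≤ 1 := by
    rw [hμ, div_le_one (by positivity)]
    nlinarith [Real.log_two_gt_d9]
  have hεμ : ε / μ = 4 * L := by
    rw [hμ]; field_simp
  have hexpz : Real.exp (4 * L) = z ^ 4 := by
    rw [show (4:ℝ) * L = ((4:ℕ):ℝ) * L by norm_num, Real.exp_nat_mul, hLdef,
      Real.exp_log (by linarith)]
  have hK : (1 + ε) * n ≤ μ * z ^ 4 := by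
    have hzrw : μ * z ^ 4 = ((n:ℝ)*m)^4 / (4 * L * ε^3) := by
      rw [hμ, hz_def]; field_simp
    rw [hzrw, le_div_iff₀ (by positivity)]
    have hnm1 : (1:ℝ) ≤ (n:ℝ)*m := by nlinarith
    have hLsplit : L = Real.log ((n:ℝ)*m) - Real.log ε := by
      rw [hLdef, hz_def, Real.log_div (by positivity) (ne_of_gt hε0)]
    have hlogn0 : 0 ≤ Real.log ((n:ℝ)*m) := Real.log_nonneg hnm1
    have hlogn : Real.log ((n:ℝ)*m) ≤ (n:ℝ)*m - 1 :=
      Real.log_le_sub_one_of_pos (by positivity)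
    have hloge : -Real.log ε ≤ ε⁻¹ - 1 := by
      have h := Real.log_le_sub_one_of_pos (inv_pos.mpr hε0)
      rwa [Real.log_inv] at h
    have he3 : ε^3 ≤ (1/2)^3 := pow_le_pow_left₀ hε0.le hεhalf 3
    have he4 : ε*ε^3 ≤ (1/2)*ε^3 :=
      mul_le_mul_of_nonneg_right hεhalf (pow_nonneg hε0.le 3)
    have hc : 4*(1+ε)*ε^3 ≤ 3/4 := by nlinarith
    have hc0 : 0 ≤ 4*(1+ε)*ε^3 := by positivity
    have h1 : 4*(1+ε)*ε^3 * Real.log ((n:ℝ)*m) ≤ (3/4)*((n:ℝ)*m - 1) := by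
      calc 4*(1+ε)*ε^3 * Real.log ((n:ℝ)*m) ≤ (3/4) * Real.log ((n:ℝ)*m) :=
            mul_le_mul_of_nonneg_right hc hlogn0
        _ ≤ (3/4)*((n:ℝ)*m - 1) := by linarith
    have hQ' : ε * (-Real.log ε) ≤ 1 - ε := by
      have h := mul_le_mul_of_nonneg_left hloge hε0.le
      have heq : ε * (ε⁻¹ - 1) = 1 - ε := by field_simp
      rwa [heq] at h
    have h2 : 4*(1+ε)*ε^3 * (-Real.log ε) ≤ 3/4 := by
      have e1 : 4*(1+ε)*ε^3 * (-Real.log ε) = (4*(1+ε)*ε^2) * (ε * (-Real.log ε)) := by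
        ring
      have e2 : (4*(1+ε)*ε^2) * (ε * (-Real.log ε)) ≤ (4*(1+ε)*ε^2) * (1-ε) :=
        mul_le_mul_of_nonneg_left hQ' (by positivity)
      have e3 : (4*(1+ε)*ε^2) * (1-ε) ≤ 3/4 := by
        nlinarith [mul_nonneg (show (0:ℝ) ≤ 1-4*ε^2 by nlinarith)
          (show (0:ℝ) ≤ 3-4*ε^2 by nlinarith)]
      rw [e1]; exact le_trans e2 e3
    have hLle : 4*(1+ε)*ε^3 * L ≤ (3/4)*((n:ℝ)*m) := by
      have e1 : 4*(1+ε)*ε^3 * L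
          = 4*(1+ε)*ε^3 * Real.log ((n:ℝ)*m) + 4*(1+ε)*ε^3 * (-Real.log ε) := by
        rw [hLsplit]; ring
      rw [e1]; linarith
    have ha : ((n:ℝ)*m)*(n:ℝ) ≤ ((n:ℝ)*m)^2 := by nlinarith
    have hb : ((n:ℝ)*m)^2 ≤ ((n:ℝ)*m)^4 := by
      nlinarith [mul_nonneg (sq_nonneg ((n:ℝ)*m))
        (show (0:ℝ) ≤ ((n:ℝ)*m)^2 - 1 by nlinarith)]
    have hmul := mul_le_mul_of_nonneg_left hLle (le_trans zero_le_one hn1)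
    nlinarith [hmul, ha, hb]
  intro x hx hf
  have hSnn : 0 ≤ ∑ j, Real.exp ((1/μ) * (A.mulVec x j - 1)) :=
    Finset.sum_nonneg fun j _ => (Real.exp_pos _).le
  have hoptpos : 0 < (1-δ) * opt := by nlinarith
  have hsum_ge : (1-δ) * opt ≤ ∑ i, x i := by
    have hf' := hf
    unfold fmu at hf'
    nlinarith [mul_nonneg hμpos.le hSnn]
  have hfeas : ∀ j, A.mulVec x j ≤ 1 + ε := by
    by_contra hcon
    push_neg at hcon
    obtain ⟨j1, hj1⟩ := hcon
    obtain ⟨j0, -, hj0⟩ := Finset.exists_max_image Finset.univ (fun j => A.mulVec x j)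
      ⟨j1, Finset.mem_univ _⟩
    have ht : 1 + ε < A.mulVec x j0 := lt_of_lt_of_le hj1 (hj0 j1 (Finset.mem_univ _))
    set t := A.mulVec x j0 with htdef
    have ht0 : 0 < t := by linarith
    have hub : (∑ i, x i / t) ≤ opt := by
      refine hopt.1 ⟨fun i => x i / t, fun i => div_nonneg (hx i) ht0.le, fun j => ?_, rfl⟩
      have hmv : A.mulVec (fun i => x i / t) j = A.mulVec x j / t := by
        simp [Matrix.mulVec, dotProduct, Finset.sum_div, mul_div_assoc]
      rw [hmv, div_le_one ht0]
      exact hj0 j (Finset.mem_univ _)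
    have hsum_le : ∑ i, x i ≤ t * (n:ℝ) := by
      rw [← Finset.sum_div, div_le_iff₀ ht0] at hub
      nlinarith
    have hterm : Real.exp ((1/μ)*(t - 1)) ≤ ∑ j, Real.exp ((1/μ)*(A.mulVec x j - 1)) :=
      Finset.single_le_sum (f := fun j => Real.exp ((1/μ)*(A.mulVec x j - 1)))
        (fun j _ => (Real.exp_pos _).le) (Finset.mem_univ j0)
    have hsplit : Real.exp ((1/μ)*(t-1)) = Real.exp (ε/μ) * Real.exp ((t-1-ε)/μ) := by
      rw [← Real.exp_add]; congr 1; field_simp; ring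
    have hs : 0 < t - 1 - ε := by linarith
    have hexps : 1 + (t-1-ε)/μ ≤ Real.exp ((t-1-ε)/μ) := by
      linarith [Real.add_one_le_exp ((t-1-ε)/μ)]
    have hB : (1+ε)*(n:ℝ) ≤ μ * Real.exp (ε/μ) := by rw [hεμ, hexpz]; exact hK
    have hs' : t - 1 - ε ≤ (t-1-ε)/μ := by
      rw [le_div_iff₀ hμpos]; nlinarith
    have hchain : t * (n:ℝ) ≤ μ * Real.exp ((1/μ)*(t-1)) := by
      have step1 : t * (n:ℝ) ≤ (1+ε)*(n:ℝ) * (1 + (t-1-ε)/μ) := by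
        nlinarith [mul_le_mul_of_nonneg_left hs' (show (0:ℝ) ≤ (1+ε)*(n:ℝ) by positivity),
          mul_nonneg (mul_nonneg hε0.le hs.le) (le_trans zero_le_one hn1)]
      have step2 : (1+ε)*(n:ℝ) * (1 + (t-1-ε)/μ)
          ≤ (μ * Real.exp (ε/μ)) * Real.exp ((t-1-ε)/μ) := by
        apply mul_le_mul hB hexps (by positivity)
        positivity
      calc t * (n:ℝ) ≤ (1+ε)*(n:ℝ) * (1 + (t-1-ε)/μ) := step1
        _ ≤ (μ * Real.exp (ε/μ)) * Real.exp ((t-1-ε)/μ) := step2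
        _ = μ * Real.exp ((1/μ)*(t-1)) := by rw [hsplit]; ring
    have hfge : (0:ℝ) ≤ fmu A μ x := by
      unfold fmu
      have hms := mul_le_mul_of_nonneg_left hterm hμpos.le
      nlinarith
    nlinarith
  refine ⟨fun i => div_nonneg (hx i) (by linarith), fun j => ?_, ?_⟩
  · have hmv : A.mulVec (fun i => x i / (1+ε)) j = A.mulVec x j / (1+ε) := by
      simp [Matrix.mulVec, dotProduct, Finset.sum_div, mul_div_assoc]
    rw [hmv, div_le_one (by linarith)]
    exact hfeas j
  · rw [← Finset.sum_div, show ((1-δ)/(1+ε))*opt = ((1-δ)*opt)/(1+ε) by ring,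
      div_le_div_iff_of_pos_right (by linarith)]
    exact hsum_ge
end

section
/- Assume the setup of the bucketed truncated-gradient update with ε ∈ (0, 1/2], μ = ε/(4 log(nm/ε)), and α = μ/20. Let x ∈ ℝⁿ with x ≥ 0 and Ax ≤ (1 + ε)·1, let t ∈ {0, …, w−1}, and let B_t = {i : ξ^{(t)}_i ≠ 0}. Then for every τ ∈ [0, 1], setting z = τ·x + (1 − τ)·x′^{(t)}, for every i ∈ B_t the value ∇_i f_μ(z) lies between (1/2)·∇_i f_μ(x) and (3/2)·∇_i f_μ(x). -/
set_option maxHeartbeats 1000000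

private lemma aux_exp_facts {b : ℝ} (h0 : 0 ≤ b) (h19 : b ≤ 19/1000) :
    1 ≤ Real.exp b ∧ Real.exp (-b) ≤ 1 ∧ Real.exp b - 1 ≤ (51/50) * b ∧
      2 ≤ Real.exp b + Real.exp (-b) := by
  have h1 : 1 - b ≤ Real.exp (-b) := by linarith [Real.add_one_le_exp (-b)]
  have h2 : Real.exp (-b) * Real.exp b = 1 := by rw [← Real.exp_add]; simp
  have h3 := Real.exp_pos b
  have h4 := Real.exp_pos (-b)
  have hge : 1 ≤ Real.exp b := by nlinarith [Real.add_one_le_exp b]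
  have hle1 : Real.exp (-b) ≤ 1 := by nlinarith
  have h5 : (1 - b) * Real.exp b ≤ 1 := by nlinarith
  have h6 : Real.exp b ≤ 51/50 := by nlinarith
  refine ⟨hge, hle1, by nlinarith, by nlinarith [Real.add_one_le_exp b]⟩

private lemma aux_fac {τ xv e b : ℝ} (hτ0 : 0 ≤ τ) (hτ1 : τ ≤ 1) (hx0 : 0 ≤ xv)
    (hel : Real.exp (-b) ≤ e) (heu : e ≤ Real.exp b)
    (h1 : Real.exp (-b) ≤ 1) (h2 : 1 ≤ Real.exp b) :
    Real.exp (-b) * xv ≤ τ * xv + (1 - τ) * (xv * e) ∧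
      τ * xv + (1 - τ) * (xv * e) ≤ Real.exp b * xv := by
  constructor
  · have p1 : 0 ≤ τ * xv * (1 - Real.exp (-b)) :=
      mul_nonneg (mul_nonneg hτ0 hx0) (by linarith)
    have p2 : 0 ≤ (1 - τ) * xv * (e - Real.exp (-b)) :=
      mul_nonneg (mul_nonneg (by linarith) hx0) (by linarith)
    nlinarith [p1, p2]
  · have p1 : 0 ≤ τ * xv * (Real.exp b - 1) :=
      mul_nonneg (mul_nonneg hτ0 hx0) (by linarith)
    have p2 : 0 ≤ (1 - τ) * xv * (Real.exp b - e) :=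
      mul_nonneg (mul_nonneg (by linarith) hx0) (by linarith)
    nlinarith [p1, p2]

private lemma aux_shift {a d cc : ℝ} (h1 : -cc ≤ d) (h2 : d ≤ cc) :
    Real.exp (-cc) * Real.exp a ≤ Real.exp (a + d) ∧
      Real.exp (a + d) ≤ Real.exp cc * Real.exp a := by
  rw [Real.exp_add]
  constructor
  · nlinarith [mul_le_mul_of_nonneg_left (Real.exp_le_exp.mpr h1) (Real.exp_pos a).le]
  · nlinarith [mul_le_mul_of_nonneg_left (Real.exp_le_exp.mpr h2) (Real.exp_pos a).le]

private lemma aux_diff {Ax Az ε eb : ℝ} (hAx0 : 0 ≤ Ax) (hAxu : Ax ≤ 1 + ε) (hε0 : 0 < ε)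
    (hl : Real.exp (-eb) * Ax ≤ Az) (hu : Az ≤ Real.exp eb * Ax)
    (h1 : 1 ≤ Real.exp eb) (h1' : Real.exp (-eb) ≤ 1)
    (hsum : 2 ≤ Real.exp eb + Real.exp (-eb)) :
    -((Real.exp eb - 1) * (1 + ε)) ≤ Az - Ax ∧ Az - Ax ≤ (Real.exp eb - 1) * (1 + ε) := by
  constructor
  · have h2' : -((Real.exp eb - 1) * (1 + ε)) ≤ (Real.exp (-eb) - 1) * Ax := by
      nlinarith [mul_nonneg (show (0:ℝ) ≤ 1 - Real.exp (-eb) by linarith)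
          (show (0:ℝ) ≤ 1 + ε - Ax by linarith),
        mul_nonneg (show (0:ℝ) ≤ 1 + ε by linarith)
          (show (0:ℝ) ≤ Real.exp eb + Real.exp (-eb) - 2 by linarith)]
    nlinarith [hl]
  · have h2' : (Real.exp eb - 1) * Ax ≤ (Real.exp eb - 1) * (1 + ε) :=
      mul_le_mul_of_nonneg_left hAxu (by linarith)
    nlinarith [hu]

private lemma aux_c {μ E ε c : ℝ} (hμ0 : 0 < μ) (hμ19 : μ ≤ 19/100) (hE0 : 0 < E)
    (hE1 : E ≤ 1) (hε0 : 0 < ε) (hε2 : ε ≤ 1/2)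
    (hc : c = (Real.exp (μ * E / 10) - 1) * (1 + ε) / μ) :
    0 ≤ c ∧ c ≤ 4/25 * E := by
  have hb0 : 0 ≤ μ * E / 10 := by positivity
  have hb19 : μ * E / 10 ≤ 19/1000 := by nlinarith
  obtain ⟨hge, -, hub, -⟩ := aux_exp_facts hb0 hb19
  constructor
  · rw [hc]; apply div_nonneg _ hμ0.le; nlinarith
  · rw [hc, div_le_iff₀ hμ0]
    have h1 : (Real.exp (μ * E / 10) - 1) * (1 + ε) ≤ (51/50) * (μ * E / 10) * (1 + ε) := by
      nlinarith
    have h2 : (51/50) * (μ * E / 10) * (1 + ε) ≤ 4/25 * E * μ := by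
      nlinarith [mul_nonneg hμ0.le hE0.le,
        mul_nonneg (show (0:ℝ) ≤ 1/2 - ε by linarith) (mul_nonneg hμ0.le hE0.le)]
    linarith

private lemma aux_final {S Sz c E : ℝ} (hS0 : 0 ≤ S)
    (hlo : (1 - c) * S ≤ Sz) (hup : (1 - c) * Sz ≤ S)
    (hc0 : 0 ≤ c) (hcE : c ≤ 4/25 * E) (hE0 : 0 < E) (hE1 : E ≤ 1)
    (hsign : E < -1 + S ∨ -1 + S < -E) :
    -1 + Sz ∈ Set.uIcc ((1/2) * (-1 + S)) ((3/2) * (-1 + S)) := by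
  have hcq : c ≤ 4/25 := by nlinarith
  have h1c : (0:ℝ) < 1 - c := by linarith
  rcases hsign with hp | hn
  · have hS1 : 1 + E < S := by linarith
    rw [Set.uIcc_of_le (by nlinarith : (1/2) * (-1 + S) ≤ (3/2) * (-1 + S))]
    have hcS : c ≤ 4/25 * (S - 1) := by nlinarith
    have hc3 : c * (S - 1) ≤ 4/25 * (S - 1) :=
      mul_le_mul_of_nonneg_right hcq (by linarith)
    refine Set.mem_Icc.mpr ⟨by nlinarith [hlo], ?_⟩
    nlinarith [hup, hcS, hc3, h1c]
  · have hS1 : S < 1 - E := by linarith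
    rw [Set.uIcc_of_ge (by nlinarith : (3/2) * (-1 + S) ≤ (1/2) * (-1 + S))]
    have hcS : c ≤ 4/25 * (1 - S) := by nlinarith
    have hcS' : c * S ≤ c := by nlinarith [mul_le_mul_of_nonneg_left hS0 hc0]
    refine Set.mem_Icc.mpr ⟨by nlinarith [hlo], ?_⟩
    nlinarith [hup, hcS, hcS', hc0, h1c]


/-- The gradient of `f_μ`: `∇ᵢ f_μ(x) = −1 + ∑ⱼ A_{ji} exp((1/μ)((Ax)ⱼ − 1))`. -/
noncomputable def gradFmu {m n : ℕ} (A : Matrix (Fin m) (Fin n) ℝ) (μ : ℝ) (x : Fin n → ℝ)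
    (i : Fin n) : ℝ :=
  -1 + ∑ j, A j i * Real.exp ((1 / μ) * (A.mulVec x j - 1))

/-- Truncated gradient `ξ`: zero on `[−ε, ε]`, capped at `1` above `1`, equal to `g` in between. -/
noncomputable def xiTrunc {n : ℕ} (ε : ℝ) (g : Fin n → ℝ) (i : Fin n) : ℝ :=
  if g i ∈ Set.Icc (-ε) ε then 0 else if 1 < g i then 1 else g i

/-- The large component `η`: `ηᵢ = gᵢ − 1` when `gᵢ > 1`, and `0` otherwise. -/
noncomputable def etaTrunc {n : ℕ} (g : Fin n → ℝ) (i : Fin n) : ℝ :=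
  if 1 < g i then g i - 1 else 0

/-- Bucketed truncated gradient `ξ^{(t)}`: keeps `ξᵢ` when `ξᵢ ∈ (ε2ᵗ, ε2^{t+1}] ∪ [−ε2^{t+1}, −ε2ᵗ)`. -/
noncomputable def xiBucket {n : ℕ} (ε : ℝ) (ξ : Fin n → ℝ) (t : ℕ) (i : Fin n) : ℝ :=
  if ξ i ∈ Set.Ioc (ε * 2 ^ t) (ε * 2 ^ (t + 1)) ∪ Set.Ico (-(ε * 2 ^ (t + 1))) (-(ε * 2 ^ t))
    then ξ i else 0

/-- Bucketed large component `η^{(t)}`: equals `η` when `t = w − 1`, and `0` otherwise. -/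
noncomputable def etaBucket {n : ℕ} (w : ℕ) (η : Fin n → ℝ) (t : ℕ) : Fin n → ℝ :=
  if t = w - 1 then η else 0

/-- The update step: `x′^{(t)}ᵢ = xᵢ · exp(−α ξ^{(t)}ᵢ)`. -/
noncomputable def updStep {n : ℕ} (α : ℝ) (x ξt : Fin n → ℝ) (i : Fin n) : ℝ :=
  x i * Real.exp (-(α * ξt i))

/-- The number of buckets `w = ⌈log₂(1/ε)⌉`. -/
noncomputable def wBuckets (ε : ℝ) : ℕ := ⌈Real.logb 2 (1 / ε)⌉₊

/-- with `ε ∈ (0,1/2]`, `μ = ε/(4 log(nm/ε))`, `α = μ/20`, and `x ≥ 0` with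
`Ax ≤ (1 + ε)·1`, for every bucket `t < w`, every updated coordinate `i` (i.e. `ξ^{(t)}ᵢ ≠ 0`),
and every point `z = τx + (1 − τ)x′^{(t)}` with `τ ∈ [0,1]`, the value `∇ᵢ f_μ(z)` lies between
`(1/2)∇ᵢ f_μ(x)` and `(3/2)∇ᵢ f_μ(x)`. -/
theorem local_gradient_stability (m n : ℕ) (hm : 0 < m) (hn : 0 < n)
    (A : Matrix (Fin m) (Fin n) ℝ) (hA : ∀ j i, 0 ≤ A j i)
    (ε : ℝ) (hε : ε ∈ Set.Ioc (0 : ℝ) (1 / 2))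
    (μ : ℝ) (hμ : μ = ε / (4 * Real.log ((n : ℝ) * m / ε)))
    (α : ℝ) (hα : α = μ / 20)
    (x : Fin n → ℝ) (hx : ∀ i, 0 ≤ x i) (hfeas : ∀ j, A.mulVec x j ≤ 1 + ε)
    (t : ℕ) (ht : t < wBuckets ε) :
    ∀ i : Fin n, xiBucket ε (xiTrunc ε (gradFmu A μ x)) t i ≠ 0 →
      ∀ τ ∈ Set.Icc (0 : ℝ) 1,
        gradFmu A μ
            (fun i' => τ * x i' +
              (1 - τ) * updStep α x (xiBucket ε (xiTrunc ε (gradFmu A μ x)) t) i') i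
          ∈ Set.uIcc ((1 / 2) * gradFmu A μ x i) ((3 / 2) * gradFmu A μ x i) := by
  obtain ⟨hε0, hε2⟩ := hε
  have hmn1 : (1:ℝ) ≤ (n:ℝ) * m := by
    have h1 : (1:ℝ) ≤ (n:ℝ) := by exact_mod_cast hn
    have h2 : (1:ℝ) ≤ (m:ℝ) := by exact_mod_cast hm
    nlinarith
  have h2nm : (2:ℝ) ≤ (n:ℝ) * m / ε := by
    rw [le_div_iff₀ hε0]; nlinarith
  have hlog2 : (0.6931471803:ℝ) < Real.log 2 := Real.log_two_gt_d9
  have hL : Real.log 2 ≤ Real.log ((n:ℝ) * m / ε) :=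
    Real.log_le_log (by norm_num) h2nm
  have hμ0 : 0 < μ := by
    rw [hμ]; exact div_pos hε0 (by linarith)
  have hμ19 : μ ≤ 19/100 := by
    rw [hμ, div_le_iff₀ (by linarith : (0:ℝ) < 4 * Real.log ((n:ℝ) * m / ε))]
    nlinarith
  have hα0 : 0 ≤ α := by rw [hα]; positivity
  intro i hi τ hτ
  obtain ⟨hτ0, hτ1⟩ := hτ
  set g := gradFmu A μ x with hgdef
  set ξ := xiTrunc ε g with hξdef
  set ξt := xiBucket ε ξ t with hξtdef
  set z : Fin n → ℝ := fun i' => τ * x i' + (1 - τ) * updStep α x ξt i' with hzdef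
  set E := ε * 2 ^ t with hEdef
  have hE0 : 0 < E := by rw [hEdef]; positivity
  have h2E : ε * 2 ^ (t + 1) = 2 * E := by rw [hEdef, pow_succ]; ring
  have hE1 : E ≤ 1 := by
    have hlb0 : 0 ≤ Real.logb 2 (1 / ε) := Real.logb_nonneg (by norm_num) (by
      rw [le_div_iff₀ hε0]; linarith)
    have hceil : (wBuckets ε : ℝ) < Real.logb 2 (1 / ε) + 1 := Nat.ceil_lt_add_one hlb0
    have ht' : (t:ℝ) + 1 ≤ (wBuckets ε : ℝ) := by exact_mod_cast ht
    have htlb : (t:ℝ) ≤ Real.logb 2 (1 / ε) := by linarith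
    have h2t : (2:ℝ) ^ t ≤ 1 / ε := by
      calc (2:ℝ) ^ t = (2:ℝ) ^ (t:ℝ) := (Real.rpow_natCast 2 t).symm
        _ ≤ (2:ℝ) ^ (Real.logb 2 (1 / ε)) :=
            (Real.rpow_le_rpow_left_iff (by norm_num : (1:ℝ) < 2)).mpr htlb
        _ = 1 / ε := Real.rpow_logb (by norm_num) (by norm_num) (by positivity)
    rw [hEdef]
    calc ε * 2 ^ t ≤ ε * (1 / ε) := mul_le_mul_of_nonneg_left h2t hε0.le
      _ = 1 := by field_simp
  -- extract bucket membership
  rw [hξtdef, xiBucket] at hi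
  by_cases hmem : ξ i ∈ Set.Ioc (ε * 2 ^ t) (ε * 2 ^ (t + 1))
      ∪ Set.Ico (-(ε * 2 ^ (t + 1))) (-(ε * 2 ^ t))
  swap
  · rw [if_neg hmem] at hi; exact absurd rfl hi
  clear hi
  rw [h2E, ← hEdef] at hmem
  have hξi : ξ i = if g i ∈ Set.Icc (-ε) ε then 0 else if 1 < g i then 1 else g i := by
    rw [hξdef, xiTrunc]
  -- sign analysis
  have hsign : E < g i ∨ g i < -E := by
    rcases hmem with hp | hn'
    · left
      have hp1 : E < ξ i := hp.1
      by_cases h1 : g i ∈ Set.Icc (-ε) ε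
      · rw [hξi, if_pos h1] at hp1; linarith
      · by_cases h2 : 1 < g i
        · linarith
        · rw [hξi, if_neg h1, if_neg h2] at hp1; exact hp1
    · right
      have hn1 : ξ i < -E := hn'.2
      by_cases h1 : g i ∈ Set.Icc (-ε) ε
      · rw [hξi, if_pos h1] at hn1; linarith
      · by_cases h2 : 1 < g i
        · rw [hξi, if_neg h1, if_pos h2] at hn1; linarith
        · rw [hξi, if_neg h1, if_neg h2] at hn1; exact hn1
  -- bound on ξt
  have hξtb : ∀ i', -(2*E) ≤ ξt i' ∧ ξt i' ≤ 2*E := by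
    intro i'
    rw [hξtdef, xiBucket, h2E, ← hEdef]
    split_ifs with h
    · rcases h with h | h
      · exact ⟨by linarith [h.1, hE0], h.2⟩
      · exact ⟨h.1, by linarith [h.2, hE0]⟩
    · constructor <;> linarith
  -- perturbation scale β
  set β := μ * E / 10 with hβdef
  have hβ0 : 0 ≤ β := by rw [hβdef]; positivity
  have hβ19 : β ≤ 19/1000 := by rw [hβdef]; nlinarith [hμ0.le, hE0.le]
  obtain ⟨hexpβ_ge1, hexpnβ_le1, hem1, hsumβ⟩ := aux_exp_facts hβ0 hβ19
  -- the multiplicative gradient perturbation c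
  set c := (Real.exp β - 1) * (1 + ε) / μ with hcdef
  have hceq : c = (Real.exp (μ * E / 10) - 1) * (1 + ε) / μ := by rw [hcdef, hβdef]
  obtain ⟨hc0, hcE⟩ := aux_c hμ0 hμ19 hE0 hE1 hε0 hε2 hceq
  have hcq : c ≤ 4/25 := by nlinarith [hcE, hE1, hE0]
  have hc1 : 1 - c ≤ Real.exp (-c) := by linarith [Real.add_one_le_exp (-c)]
  have hprodc : Real.exp (-c) * Real.exp c = 1 := by rw [← Real.exp_add]; simp
  have hexpc_pos := Real.exp_pos c
  -- per-coordinate bounds on z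
  have hfac : ∀ i', Real.exp (-β) * x i' ≤ z i' ∧ z i' ≤ Real.exp β * x i' := by
    intro i'
    obtain ⟨hb1, hb2⟩ := hξtb i'
    have he1 : Real.exp (-β) ≤ Real.exp (-(α * ξt i')) := by
      apply Real.exp_le_exp.mpr
      have h := mul_le_mul_of_nonneg_left hb2 hα0
      rw [hβdef, hα] at *
      nlinarith [h]
    have he2 : Real.exp (-(α * ξt i')) ≤ Real.exp β := by
      apply Real.exp_le_exp.mpr
      have h := mul_le_mul_of_nonneg_left hb1 hα0
      rw [hβdef, hα] at *
      nlinarith [h]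
    have hz' : z i' = τ * x i' + (1 - τ) * (x i' * Real.exp (-(α * ξt i'))) := by
      rw [hzdef]; simp [updStep]
    rw [hz']
    exact aux_fac hτ0 hτ1 (hx i') he1 he2 hexpnβ_le1 hexpβ_ge1
  -- bounds on (Az)_j
  have hmv : ∀ (v : Fin n → ℝ) j, A.mulVec v j = ∑ i', A j i' * v i' := fun v j => rfl
  have hAx0 : ∀ j, 0 ≤ A.mulVec x j := by
    intro j; rw [hmv]
    exact Finset.sum_nonneg fun i' _ => mul_nonneg (hA j i') (hx i')
  have hAz : ∀ j, Real.exp (-β) * A.mulVec x j ≤ A.mulVec z j ∧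
      A.mulVec z j ≤ Real.exp β * A.mulVec x j := by
    intro j
    constructor
    · rw [hmv x, hmv z, Finset.mul_sum]
      apply Finset.sum_le_sum
      intro i' _
      calc Real.exp (-β) * (A j i' * x i') = A j i' * (Real.exp (-β) * x i') := by ring
        _ ≤ A j i' * z i' := mul_le_mul_of_nonneg_left (hfac i').1 (hA j i')
    · rw [hmv x, hmv z, Finset.mul_sum]
      apply Finset.sum_le_sum
      intro i' _
      calc A j i' * z i' ≤ A j i' * (Real.exp β * x i') :=
            mul_le_mul_of_nonneg_left (hfac i').2 (hA j i')
        _ = Real.exp β * (A j i' * x i') := by ring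
  -- exponential term bounds
  have hqz : ∀ j, Real.exp (-c) * Real.exp (1 / μ * (A.mulVec x j - 1)) ≤
      Real.exp (1 / μ * (A.mulVec z j - 1)) ∧
      Real.exp (1 / μ * (A.mulVec z j - 1)) ≤
      Real.exp c * Real.exp (1 / μ * (A.mulVec x j - 1)) := by
    intro j
    obtain ⟨hj1, hj2⟩ := hAz j
    obtain ⟨hdlo, hdup⟩ := aux_diff (hAx0 j) (hfeas j) hε0 hj1 hj2 hexpβ_ge1 hexpnβ_le1 hsumβ
    have hcμ : c * μ = (Real.exp β - 1) * (1 + ε) := by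
      rw [hcdef]; field_simp
    have hdu : 1 / μ * (A.mulVec z j - A.mulVec x j) ≤ c := by
      rw [one_div_mul_eq_div, div_le_iff₀ hμ0]
      linarith [hdup, hcμ]
    have hdl : -c ≤ 1 / μ * (A.mulVec z j - A.mulVec x j) := by
      rw [one_div_mul_eq_div, le_div_iff₀ hμ0]
      nlinarith [hdlo, hcμ]
    have heq : 1 / μ * (A.mulVec z j - 1) =
        1 / μ * (A.mulVec x j - 1) + 1 / μ * (A.mulVec z j - A.mulVec x j) := by ring
    rw [heq]
    exact aux_shift hdl hdu
  -- sum-level bounds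
  have hS0 : 0 ≤ ∑ j, A j i * Real.exp (1 / μ * (A.mulVec x j - 1)) :=
    Finset.sum_nonneg fun j _ => mul_nonneg (hA j i) (Real.exp_pos _).le
  have hSz0 : 0 ≤ ∑ j, A j i * Real.exp (1 / μ * (A.mulVec z j - 1)) :=
    Finset.sum_nonneg fun j _ => mul_nonneg (hA j i) (Real.exp_pos _).le
  have hSzlo : Real.exp (-c) * ∑ j, A j i * Real.exp (1 / μ * (A.mulVec x j - 1)) ≤
      ∑ j, A j i * Real.exp (1 / μ * (A.mulVec z j - 1)) := by
    rw [Finset.mul_sum]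
    apply Finset.sum_le_sum
    intro j _
    calc Real.exp (-c) * (A j i * Real.exp (1 / μ * (A.mulVec x j - 1)))
        = A j i * (Real.exp (-c) * Real.exp (1 / μ * (A.mulVec x j - 1))) := by ring
      _ ≤ A j i * Real.exp (1 / μ * (A.mulVec z j - 1)) :=
          mul_le_mul_of_nonneg_left (hqz j).1 (hA j i)
  have hSzup : ∑ j, A j i * Real.exp (1 / μ * (A.mulVec z j - 1)) ≤
      Real.exp c * ∑ j, A j i * Real.exp (1 / μ * (A.mulVec x j - 1)) := by
    rw [Finset.mul_sum]
    apply Finset.sum_le_sum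
    intro j _
    calc A j i * Real.exp (1 / μ * (A.mulVec z j - 1))
        ≤ A j i * (Real.exp c * Real.exp (1 / μ * (A.mulVec x j - 1))) :=
          mul_le_mul_of_nonneg_left (hqz j).2 (hA j i)
      _ = Real.exp c * (A j i * Real.exp (1 / μ * (A.mulVec x j - 1))) := by ring
  have hlo : (1 - c) * (∑ j, A j i * Real.exp (1 / μ * (A.mulVec x j - 1))) ≤
      ∑ j, A j i * Real.exp (1 / μ * (A.mulVec z j - 1)) :=
    le_trans (mul_le_mul_of_nonneg_right hc1 hS0) hSzlo
  have hup : (1 - c) * (∑ j, A j i * Real.exp (1 / μ * (A.mulVec z j - 1))) ≤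
      ∑ j, A j i * Real.exp (1 / μ * (A.mulVec x j - 1)) := by
    have h2 : (1 - c) * Real.exp c ≤ 1 := by nlinarith [hc1, hprodc, hexpc_pos]
    nlinarith [mul_le_mul_of_nonneg_left hSzup (show (0:ℝ) ≤ 1 - c by linarith [hcq]),
      mul_le_mul_of_nonneg_right h2 hS0]
  -- finish
  have hgx : g i = -1 + ∑ j, A j i * Real.exp (1 / μ * (A.mulVec x j - 1)) := rfl
  have hgz : gradFmu A μ z i = -1 + ∑ j, A j i * Real.exp (1 / μ * (A.mulVec z j - 1)) := rfl
  rw [hgx] at hsign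
  rw [hgz, hgx]
  exact aux_final hS0 hlo hup hc0 hcE hE0 hE1 hsign
end

section
/- Let ε ∈ (0, 1/2], μ > 0, α = μ/20, and let t ≥ 0 be an integer with ε·2ᵗ ≤ 1. Let x ∈ ℝⁿ with x ≥ 0 and Ax ≤ (1 + ε)·1, and let z ∈ ℝⁿ satisfy |z_i − x_i| ≤ (8/3)·α·ε·2ᵗ·x_i for every i. Then for every j ∈ {1, …, m}: (1 − ε·2ᵗ/4)·p_j(x) ≤ p_j(z) ≤ (1 + ε·2ᵗ/4)·p_j(x), where p_j(x) = exp((1/μ)((Ax)_j − 1)). -/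
/-- The exponential penalty `p_j(x) = exp((1/μ)((Ax)ⱼ − 1))`. -/
noncomputable def pj {m n : ℕ} (A : Matrix (Fin m) (Fin n) ℝ) (μ : ℝ) (x : Fin n → ℝ)
    (j : Fin m) : ℝ :=
  Real.exp ((1 / μ) * (A.mulVec x j - 1))

/-- with `ε ∈ (0,1/2]`, `μ > 0`, `α = μ/20`, `ε·2ᵗ ≤ 1`, `x ≥ 0` with
`Ax ≤ (1 + ε)·1`, and `z` with `|zᵢ − xᵢ| ≤ (8/3)αε2ᵗxᵢ` for all `i`, the penalties satisfy
`(1 − ε2ᵗ/4)p_j(x) ≤ p_j(z) ≤ (1 + ε2ᵗ/4)p_j(x)` for every `j`. -/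
theorem penalty_stability (m n : ℕ) (hm : 0 < m) (hn : 0 < n)
    (A : Matrix (Fin m) (Fin n) ℝ) (hA : ∀ j i, 0 ≤ A j i)
    (ε : ℝ) (hε : ε ∈ Set.Ioc (0 : ℝ) (1 / 2))
    (μ : ℝ) (hμ : 0 < μ) (α : ℝ) (hα : α = μ / 20)
    (t : ℕ) (ht : ε * 2 ^ t ≤ 1)
    (x : Fin n → ℝ) (hx : ∀ i, 0 ≤ x i) (hfeas : ∀ j, A.mulVec x j ≤ 1 + ε)
    (z : Fin n → ℝ) (hz : ∀ i, |z i - x i| ≤ (8 / 3) * α * ε * 2 ^ t * x i) :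
    ∀ j : Fin m,
      (1 - ε * 2 ^ t / 4) * pj A μ x j ≤ pj A μ z j ∧
      pj A μ z j ≤ (1 + ε * 2 ^ t / 4) * pj A μ x j := by
  obtain ⟨hε0, hε2⟩ := hε
  set s : ℝ := ε * 2 ^ t with hs
  have hs0 : 0 < s := by positivity
  intro j
  -- bound on the difference of (Az)_j and (Ax)_j
  have hAx0 : 0 ≤ A.mulVec x j := by
    unfold Matrix.mulVec dotProduct
    exact Finset.sum_nonneg fun i _ => mul_nonneg (hA j i) (hx i)
  have hdiff : |A.mulVec z j - A.mulVec x j| ≤ (8 / 3) * α * s * A.mulVec x j := by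
    have h1 : A.mulVec z j - A.mulVec x j = ∑ i, A j i * (z i - x i) := by
      unfold Matrix.mulVec dotProduct
      rw [← Finset.sum_sub_distrib]
      congr 1; ext i; ring
    rw [h1]
    calc |∑ i, A j i * (z i - x i)| ≤ ∑ i, |A j i * (z i - x i)| :=
          Finset.abs_sum_le_sum_abs _ _
      _ ≤ ∑ i, A j i * ((8 / 3) * α * s * x i) := by
          apply Finset.sum_le_sum
          intro i _
          rw [abs_mul, abs_of_nonneg (hA j i)]
          have h := mul_le_mul_of_nonneg_left (hz i) (hA j i)
          calc A j i * |z i - x i| ≤ A j i * ((8 / 3) * α * ε * 2 ^ t * x i) := h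
            _ = A j i * ((8 / 3) * α * s * x i) := by rw [hs]; ring
      _ = (8 / 3) * α * s * A.mulVec x j := by
          unfold Matrix.mulVec dotProduct
          rw [Finset.mul_sum]
          congr 1; ext i; ring
  have hAxub : A.mulVec x j ≤ 3 / 2 := le_trans (hfeas j) (by linarith)
  have hα0 : 0 ≤ (8 / 3) * α * s := by
    have : 0 < α := by rw [hα]; linarith
    positivity
  have hdiff2 : |A.mulVec z j - A.mulVec x j| ≤ μ * s / 5 := by
    have : (8 / 3) * α * s * A.mulVec x j ≤ (8 / 3) * α * s * (3 / 2) :=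
      mul_le_mul_of_nonneg_left hAxub hα0
    rw [hα] at this hdiff
    nlinarith [hdiff]
  -- express pj z as pj x * exp u
  have hμne : μ ≠ 0 := ne_of_gt hμ
  set u : ℝ := (1 / μ) * (A.mulVec z j - A.mulVec x j) with hu
  have hpz : pj A μ z j = pj A μ x j * Real.exp u := by
    unfold pj
    rw [← Real.exp_add]
    congr 1
    rw [hu]; ring
  have hub : |u| ≤ s / 5 := by
    rw [hu, abs_mul, abs_of_nonneg (by positivity : (0:ℝ) ≤ 1 / μ)]
    calc (1 / μ) * |A.mulVec z j - A.mulVec x j| ≤ (1 / μ) * (μ * s / 5) :=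
          mul_le_mul_of_nonneg_left hdiff2 (by positivity)
      _ = s / 5 := by field_simp
  obtain ⟨hul, huu⟩ := abs_le.mp hub
  have hpx0 : 0 < pj A μ x j := Real.exp_pos _
  have hs1 : s ≤ 1 := ht
  constructor
  · -- lower bound
    have h1 : 1 - s / 4 ≤ Real.exp u := by
      calc 1 - s / 4 ≤ 1 + (-(s / 5)) := by linarith
        _ ≤ Real.exp (-(s / 5)) := by
            have := Real.add_one_le_exp (-(s / 5)); linarith
        _ ≤ Real.exp u := Real.exp_le_exp.mpr hul
    rw [hpz]
    calc (1 - s / 4) * pj A μ x j ≤ Real.exp u * pj A μ x j :=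
          mul_le_mul_of_nonneg_right h1 hpx0.le
      _ = pj A μ x j * Real.exp u := by ring
  · -- upper bound
    have h1 : Real.exp u ≤ 1 + s / 4 := by
      have h2 : Real.exp u ≤ Real.exp (s / 5) := Real.exp_le_exp.mpr huu
      have h3 : Real.exp (s / 5) ≤ 1 / (1 - s / 5) := by
        have h4 : 1 - s / 5 ≤ Real.exp (-(s / 5)) := by
          have := Real.add_one_le_exp (-(s / 5)); linarith
        have h5 : (0:ℝ) < 1 - s / 5 := by linarith
        rw [le_div_iff₀ h5]
        calc Real.exp (s / 5) * (1 - s / 5)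
            ≤ Real.exp (s / 5) * Real.exp (-(s / 5)) :=
              mul_le_mul_of_nonneg_left h4 (Real.exp_pos _).le
          _ = 1 := by rw [← Real.exp_add]; simp
      have h6 : 1 / (1 - s / 5) ≤ 1 + s / 4 := by
        rw [div_le_iff₀ (by linarith : (0:ℝ) < 1 - s / 5)]
        nlinarith
      linarith
    rw [hpz]
    calc pj A μ x j * Real.exp u ≤ pj A μ x j * (1 + s / 4) :=
          mul_le_mul_of_nonneg_left h1 hpx0.le
      _ = (1 + s / 4) * pj A μ x j := by ring
end

section
/- Assume the setup of the bucketed truncated-gradient update with ε ∈ (0, 1/2], μ = ε/(4 log(nm/ε)), and α = μ/20. Let x ∈ ℝⁿ with x ≥ 0 and Ax ≤ (1 + ε)·1. Then for every t ∈ {0, …, w−1} and every u ∈ ℝⁿ with u ≥ 0: ⟨α·η^{(t)}, x − u⟩ ≤ 4·(f_μ(x) − f_μ(x′^{(t)})). -/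
lemma helper1 (s : ℝ) (h : |s| ≤ 1) : Real.exp s - 1 ≤ s + s^2 := by
  have hb := Real.exp_bound h (n := 2) (by norm_num)
  have h2 : ∑ i ∈ Finset.range 2, s ^ i / i.factorial = 1 + s := by
    simp [Finset.sum_range_succ]
  rw [h2] at hb
  have := abs_le.mp hb
  have h3 : (Nat.factorial 2 : ℝ) = 2 := by norm_num [Nat.factorial]
  rw [h3] at this
  nlinarith [sq_abs s, abs_nonneg s, this.2]

lemma helper2 (z : ℝ) : |Real.exp z - 1| ≤ |z| * Real.exp |z| := by
  have he : Real.exp (-z) * Real.exp z = 1 := by rw [← Real.exp_add]; simp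
  rcases le_or_gt 0 z with h | h
  · rw [abs_of_nonneg h, abs_of_nonneg (by linarith [Real.add_one_le_exp z] : (0:ℝ) ≤ Real.exp z - 1)]
    have h1 := Real.add_one_le_exp (-z)
    nlinarith [Real.exp_pos z]
  · rw [abs_of_neg h, abs_of_nonpos (by nlinarith [Real.exp_lt_one_iff.mpr h] : Real.exp z - 1 ≤ 0)]
    have h1 := Real.add_one_le_exp z
    have h2 : 1 ≤ Real.exp (-z) := Real.one_le_exp (by linarith)
    nlinarith

set_option maxHeartbeats 2000000 in
lemma descent {m n : ℕ} (A : Matrix (Fin m) (Fin n) ℝ) (hA : ∀ j i, 0 ≤ A j i)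
    {μ α ε : ℝ} (hμpos : 0 < μ) (hαμ : α = μ / 20) (hα0 : 0 < α) (hα80 : α ≤ 1/80)
    (hε0 : 0 < ε) (hε2 : ε ≤ 1/2)
    (x : Fin n → ℝ) (hx : ∀ i, 0 ≤ x i) (hfeas : ∀ j, A.mulVec x j ≤ 1 + ε)
    (ξt : Fin n → ℝ) (hξt1 : ∀ i, |ξt i| ≤ 1)
    (hξtg : ∀ i, ξt i ^ 2 ≤ ξt i * gradFmu A μ x i) :
    fmu A μ (updStep α x ξt) - fmu A μ x
      ≤ -(α/2) * ∑ i, x i * (ξt i * gradFmu A μ x i) := by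
  classical
  set g : Fin n → ℝ := gradFmu A μ x with hgdef
  set P : Fin m → ℝ := fun j => Real.exp (1/μ * (A.mulVec x j - 1)) with hPdef
  set x' : Fin n → ℝ := updStep α x ξt with hx'def
  set d : Fin n → ℝ := fun i => x' i - x i with hddef
  set S : ℝ := ∑ i, x i * (ξt i * g i) with hSdef
  have hP : ∀ j, 0 < P j := fun j => Real.exp_pos _
  have hsumAP : ∀ i, ∑ j, A j i * P j = 1 + g i := by
    intro i
    rw [hgdef]
    simp only [gradFmu, hPdef]
    ring
  have hg1 : ∀ i, (-1:ℝ) ≤ g i := by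
    intro i
    have h0 : 0 ≤ ∑ j, A j i * P j :=
      Finset.sum_nonneg fun j _ => mul_nonneg (hA j i) (hP j).le
    have := hsumAP i; linarith
  have hSpt : ∀ i, 0 ≤ x i * (ξt i * g i) :=
    fun i => mul_nonneg (hx i) (le_trans (sq_nonneg _) (hξtg i))
  have hS : 0 ≤ S := Finset.sum_nonneg fun i _ => hSpt i
  have hde : ∀ i, d i = x i * (Real.exp (-(α * ξt i)) - 1) := by
    intro i; rw [hddef]; show x' i - x i = _; rw [hx'def]; show x i * _ - x i = _; ring
  have hexp2α : Real.exp α ≤ 1 + 2*α := by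
    have := helper1 α (by rw [abs_of_pos hα0]; linarith)
    nlinarith
  set c : ℝ := α * Real.exp α with hcdef
  have hc0 : 0 ≤ c := mul_nonneg hα0.le (Real.exp_pos α).le
  have hdabs : ∀ i, |d i| ≤ c * (x i * |ξt i|) := by
    intro i
    rw [hde i, abs_mul, abs_of_nonneg (hx i)]
    have hz : |(-(α * ξt i))| = α * |ξt i| := by rw [abs_neg, abs_mul, abs_of_pos hα0]
    have hzα : α * |ξt i| ≤ α := by nlinarith [hξt1 i, abs_nonneg (ξt i)]
    have h2 := helper2 (-(α*ξt i))
    rw [hz] at h2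
    have hle : Real.exp (α * |ξt i|) ≤ Real.exp α := Real.exp_le_exp.mpr hzα
    calc x i * |Real.exp (-(α * ξt i)) - 1|
        ≤ x i * (α * |ξt i| * Real.exp α) := by
          apply mul_le_mul_of_nonneg_left _ (hx i)
          calc |Real.exp (-(α * ξt i)) - 1| ≤ α * |ξt i| * Real.exp (α * |ξt i|) := h2
            _ ≤ α * |ξt i| * Real.exp α := by
                apply mul_le_mul_of_nonneg_left hle
                positivity
      _ = c * (x i * |ξt i|) := by rw [hcdef]; ring
  have hmv : ∀ (y : Fin n → ℝ) (j : Fin m), A.mulVec y j = ∑ i, A j i * y i := by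
    intro y j; simp [Matrix.mulVec, dotProduct]
  have hrow1 : ∀ j, ∑ i, A j i * (x i * |ξt i|) ≤ 1 + ε := by
    intro j
    calc ∑ i, A j i * (x i * |ξt i|) ≤ ∑ i, A j i * x i := by
          apply Finset.sum_le_sum; intro i _
          nlinarith [mul_nonneg (mul_nonneg (hA j i) (hx i)) (sub_nonneg.mpr (hξt1 i)),
            abs_nonneg (ξt i), hA j i, hx i]
      _ = A.mulVec x j := (hmv x j).symm
      _ ≤ 1 + ε := hfeas j
  have hAd : ∀ j, |A.mulVec d j| ≤ c * ∑ i, A j i * (x i * |ξt i|) := by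
    intro j
    rw [hmv d j]
    calc |∑ i, A j i * d i| ≤ ∑ i, |A j i * d i| := Finset.abs_sum_le_sum_abs _ _
      _ ≤ ∑ i, A j i * (c * (x i * |ξt i|)) := by
          apply Finset.sum_le_sum; intro i _
          rw [abs_mul, abs_of_nonneg (hA j i)]
          exact mul_le_mul_of_nonneg_left (hdabs i) (hA j i)
      _ = c * ∑ i, A j i * (x i * |ξt i|) := by
          rw [Finset.mul_sum]; exact Finset.sum_congr rfl fun i _ => by ring
  have hAd' : ∀ j, |A.mulVec d j| ≤ c * (1+ε) := fun j =>
    le_trans (hAd j) (mul_le_mul_of_nonneg_left (hrow1 j) hc0)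
  have hCS : ∀ j, (A.mulVec d j)^2 ≤ c^2 * ((1+ε) * ∑ i, A j i * (x i * ξt i ^2)) := by
    intro j
    have hnn : 0 ≤ ∑ i, A j i * (x i * ξt i^2) :=
      Finset.sum_nonneg fun i _ => mul_nonneg (hA j i) (mul_nonneg (hx i) (sq_nonneg _))
    have h1 : (A.mulVec d j)^2 ≤ c^2 * (∑ i, A j i * (x i * |ξt i|))^2 := by
      rw [← sq_abs (A.mulVec d j), ← mul_pow]
      apply pow_le_pow_left₀ (abs_nonneg _) (hAd j)
    have h2 : (∑ i, A j i * (x i * |ξt i|))^2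
        ≤ (∑ i, A j i * x i) * (∑ i, A j i * (x i * ξt i^2)) :=
      Finset.sum_sq_le_sum_mul_sum_of_sq_eq_mul _
        (fun i _ => mul_nonneg (hA j i) (hx i))
        (fun i _ => mul_nonneg (hA j i) (mul_nonneg (hx i) (sq_nonneg _)))
        (fun i _ => by rw [mul_pow, mul_pow, sq_abs]; ring)
    have h3 : ∑ i, A j i * x i ≤ 1 + ε := by rw [← hmv]; exact hfeas j
    calc (A.mulVec d j)^2 ≤ c^2 * (∑ i, A j i * (x i * |ξt i|))^2 := h1
      _ ≤ c^2 * ((∑ i, A j i * x i) * ∑ i, A j i * (x i * ξt i^2)) :=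
          mul_le_mul_of_nonneg_left h2 (sq_nonneg c)
      _ ≤ c^2 * ((1+ε) * ∑ i, A j i * (x i * ξt i^2)) := by
          apply mul_le_mul_of_nonneg_left _ (sq_nonneg c)
          exact mul_le_mul_of_nonneg_right h3 hnn
  have hswap : ∀ y : Fin n → ℝ, ∑ j, P j * ∑ i, A j i * y i = ∑ i, y i * (1 + g i) := by
    intro y
    have e1 : ∑ j, P j * ∑ i, A j i * y i = ∑ j, ∑ i, P j * (A j i * y i) :=
      Finset.sum_congr rfl fun j _ => Finset.mul_sum _ _ _
    rw [e1, Finset.sum_comm]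
    refine Finset.sum_congr rfl fun i _ => ?_
    calc ∑ j, P j * (A j i * y i) = (∑ j, A j i * P j) * y i := by
          rw [Finset.sum_mul]; exact Finset.sum_congr rfl fun j _ => by ring
      _ = y i * (1 + g i) := by rw [hsumAP i]; ring
  have hxd : x' = fun i => x i + d i := by
    funext i; rw [hddef]; show x' i = x i + (x' i - x i); ring
  have hmvx' : ∀ j, A.mulVec x' j = A.mulVec x j + A.mulVec d j := by
    intro j
    rw [hmv x' j, hmv x j, hmv d j, ← Finset.sum_add_distrib]
    refine Finset.sum_congr rfl fun i _ => ?_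
    rw [hxd]; ring
  have hPj : ∀ j, Real.exp (1/μ * (A.mulVec x j - 1)) = P j := fun j => by rw [hPdef]
  have hfd : fmu A μ x' - fmu A μ x
      = -(∑ i, d i) + μ * ∑ j, P j * (Real.exp (1/μ * A.mulVec d j) - 1) := by
    simp only [fmu]
    have h1 : ∑ i, x' i = ∑ i, x i + ∑ i, d i := by
      rw [← Finset.sum_add_distrib]
      refine Finset.sum_congr rfl fun i _ => ?_
      rw [hxd]
    have h2 : ∀ j, Real.exp (1/μ * (A.mulVec x' j - 1))
        = P j * Real.exp (1/μ * A.mulVec d j) := by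
      intro j; rw [hmvx' j, hPdef, ← Real.exp_add]; congr 1; ring
    simp only [h2, hPj, h1]
    have h3 : ∑ j, P j * (Real.exp (1/μ * A.mulVec d j) - 1)
        = ∑ j, P j * Real.exp (1/μ * A.mulVec d j) - ∑ j, P j := by
      rw [← Finset.sum_sub_distrib]
      exact Finset.sum_congr rfl fun j _ => by ring
    rw [h3]; ring
  have hcμ : c * (1+ε) ≤ μ := by
    rw [hcdef]
    have hμα : μ = 20*α := by rw [hαμ]; ring
    have h1 : Real.exp α ≤ 2 := by nlinarith
    have h2 : α * Real.exp α ≤ 2*α := by nlinarith [mul_nonneg hα0.le (by linarith : (0:ℝ) ≤ 2 - Real.exp α)]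
    nlinarith [h2, mul_nonneg hα0.le hε0.le, mul_nonneg hα0.le (by linarith : (0:ℝ) ≤ 1/2 - ε),
      mul_nonneg (mul_nonneg hα0.le (Real.exp_pos α).le) hε0.le, hα0]
  have hsb : ∀ j, |1/μ * A.mulVec d j| ≤ 1 := by
    intro j
    rw [abs_mul, abs_of_nonneg (by positivity : (0:ℝ) ≤ 1/μ)]
    calc 1/μ * |A.mulVec d j| ≤ 1/μ * (c * (1+ε)) :=
          mul_le_mul_of_nonneg_left (hAd' j) (by positivity)
      _ ≤ 1/μ * μ := mul_le_mul_of_nonneg_left hcμ (by positivity)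
      _ = 1 := by field_simp
  have hstep1 : μ * ∑ j, P j * (Real.exp (1/μ * A.mulVec d j) - 1)
      ≤ ∑ j, P j * A.mulVec d j + 1/μ * ∑ j, P j * (A.mulVec d j)^2 := by
    have hj : ∀ j ∈ Finset.univ, P j * (Real.exp (1/μ * A.mulVec d j) - 1)
        ≤ P j * (1/μ * A.mulVec d j + (1/μ * A.mulVec d j)^2) := fun j _ =>
      mul_le_mul_of_nonneg_left (by linarith [helper1 _ (hsb j)]) (hP j).le
    calc μ * ∑ j, P j * (Real.exp (1/μ * A.mulVec d j) - 1)
        ≤ μ * ∑ j, P j * (1/μ * A.mulVec d j + (1/μ * A.mulVec d j)^2) :=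
          mul_le_mul_of_nonneg_left (Finset.sum_le_sum hj) hμpos.le
      _ = ∑ j, P j * A.mulVec d j + 1/μ * ∑ j, P j * (A.mulVec d j)^2 := by
          rw [Finset.mul_sum, Finset.mul_sum, ← Finset.sum_add_distrib]
          refine Finset.sum_congr rfl fun j _ => ?_
          field_simp
  have hfirst : ∑ j, P j * A.mulVec d j = ∑ i, d i * (1 + g i) := by
    have e : ∀ j ∈ Finset.univ, P j * A.mulVec d j = P j * ∑ i, A j i * d i :=
      fun j _ => by rw [hmv d j]
    rw [Finset.sum_congr rfl e, hswap d]
  have hsum_dg : ∑ i, d i * (1 + g i) - ∑ i, d i = ∑ i, d i * g i := by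
    rw [← Finset.sum_sub_distrib]
    exact Finset.sum_congr rfl fun i _ => by ring
  have hdg : ∀ i, d i * g i ≤ -(α*(1-α)) * (x i * (ξt i * g i)) := by
    intro i
    rw [hde i]
    have hxg : 0 ≤ x i * (ξt i * g i) := hSpt i
    rcases lt_trichotomy (ξt i) 0 with hlt | heq | hgt
    · have hgneg : g i ≤ 0 := by nlinarith [hξtg i, sq_nonneg (ξt i)]
      have hexp : -(α * ξt i) ≤ Real.exp (-(α*ξt i)) - 1 := by
        linarith [Real.add_one_le_exp (-(α*ξt i))]
      have key : x i * (Real.exp (-(α*ξt i)) - 1) * g i ≤ x i * (-(α * ξt i)) * g i := by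
        nlinarith [mul_nonneg (hx i) (neg_nonneg.mpr hgneg), hexp]
      nlinarith [key, mul_nonneg hxg (sq_nonneg α)]
    · simp [heq]
    · have hgξ : ξt i ≤ g i := by nlinarith [hξtg i]
      have hgpos : 0 < g i := lt_of_lt_of_le hgt hgξ
      have hz0 : 0 < α * ξt i := mul_pos hα0 hgt
      have hz1 : α * ξt i ≤ α := by nlinarith [abs_le.mp (hξt1 i)]
      have he : Real.exp (-(α*ξt i)) * Real.exp (α*ξt i) = 1 := by
        rw [← Real.exp_add]; simp
      have h1 : Real.exp (-(α*ξt i)) - 1 ≤ -(α*ξt i) + (α*ξt i)^2 := by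
        nlinarith [Real.add_one_le_exp (α*ξt i), Real.add_one_le_exp (-(α*ξt i)),
          Real.exp_pos (-(α*ξt i))]
      have h2 : -(α*ξt i) + (α*ξt i)^2 ≤ -(α*(1-α))*ξt i := by
        have := mul_le_mul_of_nonneg_left hz1 hz0.le
        nlinarith
      nlinarith [mul_nonneg (hx i) hgpos.le, h1, h2]
  have hsum_dg_le : ∑ i, d i * g i ≤ -(α*(1-α)) * S := by
    rw [hSdef, Finset.mul_sum]
    exact Finset.sum_le_sum fun i _ => hdg i
  have hquad : ∀ i, (x i * ξt i^2) * (1 + g i) ≤ 2 * (x i * (ξt i * g i)) := by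
    intro i
    have h1 := hξtg i
    have h2 := abs_le.mp (hξt1 i)
    have h3 := hg1 i
    have h4 := hx i
    have hE : 0 ≤ 2*(ξt i * g i) - ξt i^2*(1+g i) := by
      rcases le_or_gt 0 (ξt i) with hsgn | hsgn
      · nlinarith [mul_nonneg (sub_nonneg.mpr h2.2) (le_trans (sq_nonneg _) h1),
          sub_nonneg.mpr h1]
      · have hgneg : g i ≤ 0 := by nlinarith [sq_nonneg (ξt i)]
        nlinarith [mul_nonneg (sq_nonneg (ξt i)) (neg_nonneg.mpr hgneg)]
    nlinarith [mul_nonneg h4 hE]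
  have hsecond : 1/μ * ∑ j, P j * (A.mulVec d j)^2
      ≤ (α * (Real.exp α)^2 * (1+ε) / 10) * S := by
    have b1 : 1/μ * ∑ j, P j * (A.mulVec d j)^2
        ≤ 1/μ * ∑ j, P j * (c^2 * ((1+ε) * ∑ i, A j i * (x i * ξt i^2))) := by
      apply mul_le_mul_of_nonneg_left _ (by positivity)
      exact Finset.sum_le_sum fun j _ => mul_le_mul_of_nonneg_left (hCS j) (hP j).le
    have b2 : ∑ j, P j * (c^2 * ((1+ε) * ∑ i, A j i * (x i * ξt i^2)))
        = c^2*(1+ε) * ∑ i, (x i * ξt i^2) * (1 + g i) := by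
      rw [← hswap (fun i => x i * ξt i^2), Finset.mul_sum]
      exact Finset.sum_congr rfl fun j _ => by ring
    have b3 : ∑ i, (x i * ξt i^2) * (1 + g i) ≤ 2 * S := by
      rw [hSdef, Finset.mul_sum]
      exact Finset.sum_le_sum fun i _ => hquad i
    have b4 : 1/μ * (c^2*(1+ε) * (2*S)) = (α * (Real.exp α)^2 * (1+ε) / 10) * S := by
      rw [hcdef, hαμ]
      field_simp
      ring
    calc 1/μ * ∑ j, P j * (A.mulVec d j)^2
        ≤ 1/μ * (c^2*(1+ε) * ∑ i, (x i * ξt i^2) * (1 + g i)) := by rw [← b2]; exact b1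
      _ ≤ 1/μ * (c^2*(1+ε) * (2*S)) := by
          apply mul_le_mul_of_nonneg_left _ (by positivity)
          exact mul_le_mul_of_nonneg_left b3 (by positivity)
      _ = (α * (Real.exp α)^2 * (1+ε) / 10) * S := b4
  have main1 : fmu A μ x' - fmu A μ x
      ≤ -(α*(1-α))*S + (α * (Real.exp α)^2 * (1+ε) / 10) * S := by
    rw [hfd]
    have := hstep1
    have := hsecond
    have := hsum_dg_le
    have := hsum_dg
    have := hfirst
    linarith
  have hco : (α * (Real.exp α)^2 * (1+ε) / 10) - α*(1-α) ≤ -(α/2) := by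
    have he : Real.exp α ≤ 1 + 1/40 := by linarith [hexp2α]
    have he2 : (Real.exp α)^2 ≤ 11/10 := by nlinarith [Real.exp_pos α]
    nlinarith [mul_nonneg hα0.le (sub_nonneg.mpr he2),
      mul_nonneg (mul_nonneg hα0.le hε0.le) (sub_nonneg.mpr he2),
      mul_nonneg hα0.le (by linarith : (0:ℝ) ≤ 1/2 - ε),
      mul_nonneg hα0.le (by linarith : (0:ℝ) ≤ 1/80 - α),
      mul_nonneg hα0.le hε0.le, hα0, sq_nonneg (Real.exp α)]
  have := mul_le_mul_of_nonneg_right hco hS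
  calc fmu A μ x' - fmu A μ x
      ≤ -(α*(1-α))*S + (α * (Real.exp α)^2 * (1+ε) / 10) * S := main1
    _ ≤ -(α/2) * S := by nlinarith [this]


set_option maxHeartbeats 1000000 in
/-- with `ε ∈ (0,1/2]`, `μ = ε/(4 log(nm/ε))`, `α = μ/20`, `x ≥ 0` with
`Ax ≤ (1 + ε)·1`, for every bucket `t < w` and every `u ≥ 0`,
`⟨α η^{(t)}, x − u⟩ ≤ 4(f_μ(x) − f_μ(x′^{(t)}))`. -/
theorem gradient_descent_step (m n : ℕ) (hm : 0 < m) (hn : 0 < n)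
    (A : Matrix (Fin m) (Fin n) ℝ) (hA : ∀ j i, 0 ≤ A j i)
    (ε : ℝ) (hε : ε ∈ Set.Ioc (0 : ℝ) (1 / 2))
    (μ : ℝ) (hμ : μ = ε / (4 * Real.log ((n : ℝ) * m / ε)))
    (α : ℝ) (hα : α = μ / 20)
    (x : Fin n → ℝ) (hx : ∀ i, 0 ≤ x i) (hfeas : ∀ j, A.mulVec x j ≤ 1 + ε)
    (t : ℕ) (ht : t < wBuckets ε)
    (u : Fin n → ℝ) (hu : ∀ i, 0 ≤ u i) :
    (∑ i, α * etaBucket (wBuckets ε) (etaTrunc (gradFmu A μ x)) t i * (x i - u i))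
      ≤ 4 * (fmu A μ x
          - fmu A μ (updStep α x (xiBucket ε (xiTrunc ε (gradFmu A μ x)) t))) := by
  classical
  obtain ⟨hε0, hε2⟩ := hε
  -- numeric facts about μ and α
  have hnm : (2:ℝ) ≤ (n:ℝ)*m/ε := by
    have h1 : (1:ℝ) ≤ (n:ℝ) := by exact_mod_cast hn
    have h2 : (1:ℝ) ≤ (m:ℝ) := by exact_mod_cast hm
    rw [le_div_iff₀ hε0]
    nlinarith
  have hlog : (1:ℝ)/2 < Real.log ((n:ℝ)*m/ε) := by
    have h2 : Real.log 2 ≤ Real.log ((n:ℝ)*m/ε) := Real.log_le_log (by norm_num) hnm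
    have := Real.log_two_gt_d9
    linarith
  have hμpos : 0 < μ := by rw [hμ]; exact div_pos hε0 (by linarith)
  have hα0 : 0 < α := by rw [hα]; linarith
  have hα80 : α ≤ 1/80 := by
    have hμ4 : μ ≤ 1/4 := by
      rw [hμ, div_le_iff₀ (by linarith : (0:ℝ) < 4 * Real.log ((n:ℝ)*m/ε))]
      nlinarith
    rw [hα]; linarith
  -- abbreviations
  set g : Fin n → ℝ := gradFmu A μ x with hgdef
  set ξ : Fin n → ℝ := xiTrunc ε g with hξdef
  set ξt : Fin n → ℝ := xiBucket ε ξ t with hξtdef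
  set η : Fin n → ℝ := etaTrunc g with hηdef
  set w : ℕ := wBuckets ε with hwdef
  -- g ≥ -1
  have hg1 : ∀ i, (-1:ℝ) ≤ g i := by
    intro i
    rw [hgdef]
    simp only [gradFmu]
    have h0 : 0 ≤ ∑ j, A j i * Real.exp ((1/μ) * (A.mulVec x j - 1)) :=
      Finset.sum_nonneg fun j _ => mul_nonneg (hA j i) (Real.exp_pos _).le
    linarith
  -- facts about ξ
  have hξsq : ∀ i, ξ i ^ 2 ≤ ξ i * g i := by
    intro i
    rw [hξdef]
    simp only [xiTrunc, Set.mem_Icc]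
    split_ifs with h1 h2
    · simp
    · nlinarith
    · nlinarith
  have hξ1 : ∀ i, |ξ i| ≤ 1 := by
    intro i
    rw [hξdef]
    simp only [xiTrunc, Set.mem_Icc]
    split_ifs with h1 h2
    · simp
    · simp
    · rw [abs_le]; constructor
      · exact hg1 i
      · push_neg at h2; exact h2
  have hξtc : ∀ i, ξt i = ξ i ∨ ξt i = 0 := by
    intro i
    rw [hξtdef]
    simp only [xiBucket]
    split_ifs <;> simp
  have hξtsq : ∀ i, ξt i ^ 2 ≤ ξt i * g i := by
    intro i
    rcases hξtc i with h | h <;> rw [h]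
    · exact hξsq i
    · simp
  have hξt1 : ∀ i, |ξt i| ≤ 1 := by
    intro i
    rcases hξtc i with h | h <;> rw [h]
    · exact hξ1 i
    · simp
  have hSpt : ∀ i, 0 ≤ x i * (ξt i * g i) :=
    fun i => mul_nonneg (hx i) (le_trans (sq_nonneg _) (hξtsq i))
  have hS : 0 ≤ ∑ i, x i * (ξt i * g i) := Finset.sum_nonneg fun i _ => hSpt i
  -- descent lemma
  have hdesc := descent A hA hμpos hα hα0 hα80 hε0 hε2 x hx hfeas ξt hξt1
    (by intro i; rw [← hgdef] at *; exact hξtsq i)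
  rw [← hgdef] at hdesc
  -- case split on t = w - 1
  by_cases hcase : t = w - 1
  · -- bucket facts
    have hw0 : 0 < w := lt_of_le_of_lt (Nat.zero_le t) ht
    have hw1 : 1 ≤ w := hw0
    have hy0 : 0 ≤ Real.logb 2 (1/ε) :=
      Real.logb_nonneg one_lt_two (by rw [le_div_iff₀ hε0]; linarith)
    have h2eq : (1/ε : ℝ) = 2 ^ Real.logb 2 (1/ε) :=
      (Real.rpow_logb two_pos (by norm_num) (by positivity)).symm
    have hb2 : (1:ℝ) ≤ ε * 2^w := by
      have h1 : Real.logb 2 (1/ε) ≤ (w : ℝ) := by rw [hwdef]; exact Nat.le_ceil _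
      have h3 : (2:ℝ) ^ Real.logb 2 (1/ε) ≤ (2:ℝ) ^ ((w:ℕ):ℝ) :=
        Real.rpow_le_rpow_of_exponent_le one_le_two h1
      rw [Real.rpow_natCast] at h3
      rw [← h2eq] at h3
      rw [div_le_iff₀ hε0] at h3
      linarith
    have hb1 : ε * 2^(w - 1) < 1 := by
      have h4 : (w : ℝ) < Real.logb 2 (1/ε) + 1 := by rw [hwdef]; exact Nat.ceil_lt_add_one hy0
      have h5 : ((w - 1 : ℕ) : ℝ) = (w : ℝ) - 1 := by
        rw [Nat.cast_sub hw1]; norm_num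
      have h6 : (2:ℝ) ^ ((w - 1 : ℕ):ℝ) < (2:ℝ) ^ Real.logb 2 (1/ε) :=
        Real.rpow_lt_rpow_of_exponent_lt one_lt_two (by rw [h5]; linarith)
      rw [Real.rpow_natCast, ← h2eq, lt_div_iff₀ hε0] at h6
      linarith
    -- pointwise bound on the η part
    have hpt : ∀ i, α * η i * (x i - u i) ≤ α * (x i * (ξt i * g i)) := by
      intro i
      by_cases hgi : 1 < g i
      · have hξi : ξ i = 1 := by
          rw [hξdef]; simp only [xiTrunc, Set.mem_Icc]
          rw [if_neg (by push_neg; intro _; linarith), if_pos hgi]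
        have hξti : ξt i = 1 := by
          rw [hξtdef]; simp only [xiBucket, hξi]
          rw [if_pos]
          left
          constructor
          · rw [hcase]; linarith
          · rw [hcase, Nat.sub_add_cancel hw1]; linarith
        have hηi : η i = g i - 1 := by rw [hηdef]; simp only [etaTrunc, if_pos hgi]
        rw [hηi, hξti]
        have h1 : (g i - 1)*(x i - u i) ≤ x i * (1 * g i) := by
          nlinarith [mul_nonneg (hu i) (by linarith : (0:ℝ) ≤ g i - 1), hx i, hu i]
        nlinarith [mul_le_mul_of_nonneg_left h1 hα0.le]
      · have hηi : η i = 0 := by rw [hηdef]; simp only [etaTrunc, if_neg hgi]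
        rw [hηi]
        have := hSpt i
        nlinarith [hα0]
    have hLHS : ∑ i, α * etaBucket w η t i * (x i - u i) ≤ α * ∑ i, x i * (ξt i * g i) := by
      have he : etaBucket w η t = η := by rw [etaBucket, if_pos hcase]
      rw [he, Finset.mul_sum]
      exact Finset.sum_le_sum fun i _ => hpt i
    nlinarith [hLHS, hdesc, hS, hα0, mul_nonneg hα0.le hS]
  · have he : etaBucket w η t = 0 := by rw [etaBucket, if_neg hcase]
    rw [he]
    simp only [Pi.zero_apply, mul_zero, zero_mul, Finset.sum_const_zero]
    nlinarith [hdesc, hS, hα0, mul_nonneg hα0.le hS]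
end

section
/- Assume the setup of the bucketed truncated-gradient update with ε ∈ (0, 1/2], μ = ε/(4 log(nm/ε)), and α = μ/20. Let x ∈ ℝⁿ with x ≥ 0 and Ax ≤ (1 + ε)·1. Then for every t ∈ {0, …, w−1}: f_μ(x′^{(t)}) ≤ f_μ(x); that is, one update step never increases the smoothed objective. -/
lemma exp_aux (d : ℝ) (hd : |d| ≤ 1/2) : Real.exp d ≤ 1 + d + 2*d^2 := by
  have habs := abs_le.mp hd
  have h3 : (0:ℝ) < 1 - d := by linarith
  have h1 : 1 - d ≤ Real.exp (-d) := by have := Real.add_one_le_exp (-d); linarith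
  have h2 : Real.exp d * Real.exp (-d) = 1 := by rw [← Real.exp_add]; simp
  have h4 : Real.exp d * (1 - d) ≤ 1 := by nlinarith [Real.exp_pos d]
  nlinarith

lemma exp_aux2 (s : ℝ) (h0 : 0 ≤ s) (h1 : s ≤ 1/2) : Real.exp s - 1 ≤ 2*s := by
  have := exp_aux s (by rw [abs_of_nonneg h0]; linarith)
  nlinarith

lemma one_sub_exp_le (s : ℝ) (h0 : 0 ≤ s) : 0 ≤ 1 - Real.exp (-s) ∧ 1 - Real.exp (-s) ≤ s := by
  constructor
  · have : Real.exp (-s) ≤ 1 := Real.exp_le_one_iff.mpr (by linarith)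
    linarith
  · have := Real.add_one_le_exp (-s); linarith

lemma u_abs (α v : ℝ) (hα : 0 < α) (hα2 : α ≤ 1/2) (hv : |v| ≤ 1) :
    |1 - Real.exp (-(α*v))| ≤ 2*α := by
  obtain ⟨hv1, hv2⟩ := abs_le.mp hv
  rcases le_or_gt 0 v with h | h
  · have hs : 0 ≤ α * v := by positivity
    obtain ⟨h1, h2⟩ := one_sub_exp_le (α*v) hs
    rw [abs_of_nonneg h1]
    nlinarith
  · have hs : 0 ≤ α * (-v) := by nlinarith
    have hs2 : α * (-v) ≤ 1/2 := by nlinarith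
    have := exp_aux2 (α * (-v)) hs hs2
    have hE : Real.exp (-(α*v)) = Real.exp (α * (-v)) := by ring_nf
    have h1 : 1 ≤ Real.exp (α * (-v)) := Real.one_le_exp hs
    rw [hE, abs_of_nonpos (by linarith)]
    nlinarith

lemma per_index (μ α g v : ℝ) (hμ : 0 < μ) (hα : α = μ/20) (hμ5 : μ ≤ 1/5)
    (hcase : v = 0 ∨ (0 < v ∧ v ≤ 1 ∧ v ≤ g) ∨ (v = g ∧ -1 ≤ g ∧ g < 0)) :
    3/μ * (1 - Real.exp (-(α*v)))^2 * (g+1) ≤ (1 - Real.exp (-(α*v))) * g := by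
  have hαpos : 0 < α := by rw [hα]; linarith
  have hα100 : α ≤ 1/100 := by rw [hα]; linarith
  rcases hcase with h0 | ⟨hv0, hv1, hvg⟩ | ⟨hvg, hg1, hg0⟩
  · simp [h0]
  · set u := 1 - Real.exp (-(α*v)) with hu
    have hs : 0 ≤ α * v := by positivity
    obtain ⟨hu0, hu2⟩ := one_sub_exp_le (α*v) hs
    rw [← hu] at hu0 hu2
    have hgpos : 0 < g := lt_of_lt_of_le hv0 hvg
    have hg1 : (0:ℝ) ≤ g + 1 := by linarith
    have hvgg : v * (g+1) ≤ 2*g := by nlinarith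
    rw [div_mul_eq_mul_div, div_mul_eq_mul_div, div_le_iff₀ hμ]
    have huav : u ≤ μ/20 * v := by rw [← hα]; exact hu2
    have hug1 : 0 ≤ u * (g+1) := mul_nonneg hu0 hg1
    have hd : u * (u*(g+1)) ≤ (μ/20*v) * (u*(g+1)) := mul_le_mul_of_nonneg_right huav hug1
    have hc : u*(v*(g+1)) ≤ u*(2*g) := mul_le_mul_of_nonneg_left hvgg hu0
    have he : (μ/20)*(u*(v*(g+1))) ≤ (μ/20)*(u*(2*g)) :=
      mul_le_mul_of_nonneg_left hc (by positivity)
    have hug : 0 ≤ μ*(u*g) := mul_nonneg hμ.le (mul_nonneg hu0 hgpos.le)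
    nlinarith [hd, he, hug]
  · subst hvg
    set E := Real.exp (-(α*v)) with hE
    have hEpos : 0 < E := Real.exp_pos _
    have hE1 : 1 ≤ E := Real.one_le_exp (by nlinarith)
    have hprod : E * (1 + α*v) ≤ 1 := by
      have h := Real.add_one_le_exp (α*v)
      have h2 : Real.exp (α*v) * E = 1 := by rw [hE, ← Real.exp_add]; simp
      nlinarith
    have hav : -(1/100) ≤ α * v := by nlinarith
    have hE2 : E ≤ 2 := by
      nlinarith [mul_le_mul_of_nonneg_left hav hEpos.le]
    have hnv : 0 ≤ α * (-v) := by nlinarith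
    have hEb : E - 1 ≤ α*(-v)*2 := by
      nlinarith [mul_le_mul_of_nonneg_left hE2 hnv]
    have hEb' : E - 1 ≤ (μ/20)*(-v)*2 := by rw [← hα]; exact hEb
    rw [div_mul_eq_mul_div, div_mul_eq_mul_div, div_le_iff₀ hμ]
    have hE10 : (0:ℝ) ≤ E - 1 := by linarith
    have h1 : (E-1)^2*(v+1) ≤ (E-1)^2*1 :=
      mul_le_mul_of_nonneg_left (by linarith) (sq_nonneg _)
    have h2 : (E-1)*(E-1) ≤ (E-1)*((μ/20)*(-v)*2) := mul_le_mul_of_nonneg_left hEb' hE10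
    have h3 : 0 ≤ μ*((E-1)*(-v)) := mul_nonneg hμ.le (mul_nonneg hE10 (by linarith))
    nlinarith [h1, h2, h3]

/-- with `ε ∈ (0,1/2]`, `μ = ε/(4 log(nm/ε))`, `α = μ/20`, `x ≥ 0` with
`Ax ≤ (1 + ε)·1`, for every bucket `t < w` the update step never increases the smoothed
objective: `f_μ(x′^{(t)}) ≤ f_μ(x)`. -/
theorem objective_nonincreasing (m n : ℕ) (hm : 0 < m) (hn : 0 < n)
    (A : Matrix (Fin m) (Fin n) ℝ) (hA : ∀ j i, 0 ≤ A j i)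
    (ε : ℝ) (hε : ε ∈ Set.Ioc (0 : ℝ) (1 / 2))
    (μ : ℝ) (hμ : μ = ε / (4 * Real.log ((n : ℝ) * m / ε)))
    (α : ℝ) (hα : α = μ / 20)
    (x : Fin n → ℝ) (hx : ∀ i, 0 ≤ x i) (hfeas : ∀ j, A.mulVec x j ≤ 1 + ε)
    (t : ℕ) (ht : t < wBuckets ε) :
    fmu A μ (updStep α x (xiBucket ε (xiTrunc ε (gradFmu A μ x)) t)) ≤ fmu A μ x := by
  obtain ⟨hε0, hε2⟩ := hε
  -- basic bounds on μ and α
  have hnm : (2:ℝ) ≤ (n:ℝ) * m / ε := by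
    have h1 : (1:ℝ) ≤ (n:ℝ) * m := by
      have : (1:ℝ) ≤ (n:ℝ) := by exact_mod_cast hn
      have : (1:ℝ) ≤ (m:ℝ) := by exact_mod_cast hm
      nlinarith [show (1:ℝ) ≤ (n:ℝ) from by exact_mod_cast hn]
    rw [le_div_iff₀ hε0]; nlinarith
  have hlog2 : Real.log 2 ≤ Real.log ((n:ℝ)*m/ε) := Real.log_le_log (by norm_num) hnm
  have hlogpos : 0 < Real.log ((n:ℝ)*m/ε) := lt_of_lt_of_le (Real.log_pos (by norm_num)) hlog2
  have hμpos : 0 < μ := by rw [hμ]; positivity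
  have hμ5 : μ ≤ 1/5 := by
    rw [hμ]
    have hl : (5:ℝ)/8 ≤ Real.log ((n:ℝ)*m/ε) := by
      have := Real.log_two_gt_d9
      linarith
    rw [div_le_iff₀ (by linarith)]
    nlinarith
  have hαpos : 0 < α := by rw [hα]; linarith
  have hα100 : α ≤ 1/100 := by rw [hα]; linarith
  -- abbreviations
  set g : Fin n → ℝ := gradFmu A μ x with hgdef
  set ξ : Fin n → ℝ := xiTrunc ε g with hxidef
  set ξt : Fin n → ℝ := xiBucket ε ξ t with hxtdef
  set p : Fin m → ℝ := fun j => Real.exp ((1/μ) * (A.mulVec x j - 1)) with hpdef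
  set u : Fin n → ℝ := fun i => 1 - Real.exp (-(α * ξt i)) with hudef
  set S : Fin m → ℝ := fun j => ∑ i, A j i * (x i * u i) with hSdef
  set x' : Fin n → ℝ := updStep α x ξt with hx'def
  have hppos : ∀ j, 0 < p j := fun j => Real.exp_pos _
  have hgsum : ∀ i, ∑ j, A j i * p j = g i + 1 := by
    intro i; rw [hgdef]; unfold gradFmu; ring
  have hgm1 : ∀ i, -1 ≤ g i := by
    intro i
    have h := hgsum i
    have : 0 ≤ ∑ j, A j i * p j :=
      Finset.sum_nonneg fun j _ => mul_nonneg (hA j i) (hppos j).le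
    linarith
  -- case analysis on ξt i
  have hxi : ∀ i, ξ i = 0 ∨ (0 < ξ i ∧ ξ i ≤ 1 ∧ ξ i ≤ g i) ∨ (ξ i = g i ∧ -1 ≤ g i ∧ g i < 0) := by
    intro i
    have hg := hgm1 i
    rw [hxidef]; unfold xiTrunc
    split_ifs with h1 h2
    · left; rfl
    · right; left; exact ⟨one_pos, le_refl 1, le_of_lt h2⟩
    · rw [Set.mem_Icc, not_and_or, not_le, not_le] at h1
      rcases h1 with h | h
      · right; right; exact ⟨rfl, hg, by linarith⟩
      · right; left; exact ⟨by linarith, not_lt.mp h2, le_refl _⟩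
  have hcase : ∀ i, ξt i = 0 ∨ (0 < ξt i ∧ ξt i ≤ 1 ∧ ξt i ≤ g i) ∨
      (ξt i = g i ∧ -1 ≤ g i ∧ g i < 0) := by
    intro i
    rw [hxtdef]; unfold xiBucket
    split_ifs with h
    · exact hxi i
    · left; rfl
  have hxt1 : ∀ i, |ξt i| ≤ 1 := by
    intro i
    rcases hcase i with h | ⟨h1, h2, _⟩ | ⟨h1, h2, h3⟩
    · rw [h]; simp
    · rw [abs_le]; constructor <;> linarith
    · rw [abs_le, h1]; constructor <;> linarith
  have huabs : ∀ i, |u i| ≤ 2*α := by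
    intro i
    exact u_abs α (ξt i) hαpos (by linarith) (hxt1 i)
  -- bound on S and the shift d
  have hSabs : ∀ j, |S j| ≤ 3*α := by
    intro j
    rw [hSdef]
    calc |∑ i, A j i * (x i * u i)| ≤ ∑ i, |A j i * (x i * u i)| :=
          Finset.abs_sum_le_sum_abs _ _
      _ ≤ ∑ i, A j i * x i * (2*α) := by
          apply Finset.sum_le_sum
          intro i _
          rw [abs_mul, abs_mul, abs_of_nonneg (hA j i), abs_of_nonneg (hx i)]
          have := huabs i
          have h1 : 0 ≤ A j i * x i := mul_nonneg (hA j i) (hx i)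
          calc A j i * (x i * |u i|) = A j i * x i * |u i| := by ring
            _ ≤ A j i * x i * (2*α) := mul_le_mul_of_nonneg_left this h1
      _ = A.mulVec x j * (2*α) := by
          rw [← Finset.sum_mul]; congr 1
      _ ≤ (3/2) * (2*α) := by
          have := hfeas j
          have h32 : A.mulVec x j ≤ 3/2 := by linarith
          exact mul_le_mul_of_nonneg_right h32 (by linarith)
      _ = 3*α := by ring

  have hmv : ∀ (y : Fin n → ℝ) j, A.mulVec y j = ∑ i, A j i * y i := fun y j => rfl
  have E1 : ∀ i, x' i = x i - x i * u i := by
    intro i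
    rw [hx'def]; unfold updStep
    simp only [hudef]; ring
  have E2 : ∀ j, A.mulVec x' j = A.mulVec x j - S j := by
    intro j
    rw [hmv x', hmv x, hSdef, ← Finset.sum_sub_distrib]
    exact Finset.sum_congr rfl fun i _ => by rw [E1 i]; ring
  have hdabs : ∀ j, |(-(S j / μ))| ≤ 1/2 := by
    intro j
    rw [abs_neg, abs_div, abs_of_pos hμpos, div_le_iff₀ hμpos]
    have := hSabs j
    nlinarith
  have hbj : ∀ j, Real.exp ((1/μ) * (A.mulVec x' j - 1)) ≤
      p j - p j * S j / μ + (2/μ^2) * (p j * S j^2) := by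
    intro j
    have e : (1/μ) * (A.mulVec x' j - 1) = (1/μ) * (A.mulVec x j - 1) + (-(S j / μ)) := by
      rw [E2 j]; field_simp; ring
    rw [e, Real.exp_add]
    have h1 : Real.exp (-(S j / μ)) ≤ 1 + (-(S j/μ)) + 2*(-(S j/μ))^2 := exp_aux _ (hdabs j)
    have h2 : Real.exp ((1/μ) * (A.mulVec x j - 1)) * Real.exp (-(S j / μ)) ≤
        p j * (1 + (-(S j/μ)) + 2*(-(S j/μ))^2) := by
      rw [hpdef]
      exact mul_le_mul_of_nonneg_left h1 (Real.exp_pos _).le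
    have h3 : p j * (1 + (-(S j/μ)) + 2*(-(S j/μ))^2) =
        p j - p j * S j / μ + (2/μ^2) * (p j * S j^2) := by
      field_simp; ring
    rw [hpdef] at h2 ⊢
    linarith [h2, h3.symm.le]
  have key1 : μ * ∑ j, Real.exp ((1/μ) * (A.mulVec x' j - 1)) ≤
      μ * (∑ j, p j) - (∑ j, p j * S j) + (2/μ) * ∑ j, p j * S j^2 := by
    have hsum : ∑ j, Real.exp ((1/μ) * (A.mulVec x' j - 1)) ≤
        ∑ j, (p j - p j * S j / μ + (2/μ^2) * (p j * S j^2)) :=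
      Finset.sum_le_sum fun j _ => hbj j
    have heq : μ * ∑ j, (p j - p j * S j / μ + (2/μ^2) * (p j * S j^2)) =
        μ * (∑ j, p j) - (∑ j, p j * S j) + (2/μ) * ∑ j, p j * S j^2 := by
      rw [Finset.mul_sum, Finset.mul_sum, Finset.mul_sum,
        ← Finset.sum_sub_distrib, ← Finset.sum_add_distrib]
      refine Finset.sum_congr rfl fun j _ => ?_
      field_simp
    calc μ * ∑ j, Real.exp ((1/μ) * (A.mulVec x' j - 1))
        ≤ μ * ∑ j, (p j - p j * S j / μ + (2/μ^2) * (p j * S j^2)) :=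
          mul_le_mul_of_nonneg_left hsum hμpos.le
      _ = _ := heq
  have key2 : ∑ j, p j * S j = ∑ i, (x i * u i) * (g i + 1) := by
    calc ∑ j, p j * S j = ∑ j, ∑ i, p j * (A j i * (x i * u i)) := by
          refine Finset.sum_congr rfl fun j _ => ?_
          rw [hSdef, Finset.mul_sum]
      _ = ∑ i, ∑ j, p j * (A j i * (x i * u i)) := Finset.sum_comm
      _ = ∑ i, (x i * u i) * ∑ j, A j i * p j := by
          refine Finset.sum_congr rfl fun i _ => ?_
          rw [Finset.mul_sum]
          exact Finset.sum_congr rfl fun j _ => by ring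
      _ = ∑ i, (x i * u i) * (g i + 1) := by
          refine Finset.sum_congr rfl fun i _ => ?_
          rw [hgsum i]
  have key3 : ∀ j, S j^2 ≤ (3/2) * ∑ i, A j i * (x i * (u i)^2) := by
    intro j
    have cs : (∑ i, A j i * (x i * u i))^2 ≤
        (∑ i, A j i * x i) * ∑ i, A j i * (x i * (u i)^2) := by
      refine Finset.sum_sq_le_sum_mul_sum_of_sq_eq_mul _
        (fun i _ => mul_nonneg (hA j i) (hx i))
        (fun i _ => mul_nonneg (hA j i) (mul_nonneg (hx i) (sq_nonneg _)))
        (fun i _ => by ring)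
    have h32 : ∑ i, A j i * x i ≤ 3/2 := by
      rw [← hmv x]; have := hfeas j; linarith
    have hnn : 0 ≤ ∑ i, A j i * (x i * (u i)^2) :=
      Finset.sum_nonneg fun i _ => mul_nonneg (hA j i) (mul_nonneg (hx i) (sq_nonneg _))
    calc S j^2 = (∑ i, A j i * (x i * u i))^2 := by rw [hSdef]
      _ ≤ (∑ i, A j i * x i) * ∑ i, A j i * (x i * (u i)^2) := cs
      _ ≤ (3/2) * ∑ i, A j i * (x i * (u i)^2) :=
          mul_le_mul_of_nonneg_right h32 hnn
  have key4 : (2/μ) * ∑ j, p j * S j^2 ≤ (3/μ) * ∑ i, (x i * (u i)^2) * (g i + 1) := by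
    have step1 : ∑ j, p j * S j^2 ≤ ∑ j, p j * ((3/2) * ∑ i, A j i * (x i * (u i)^2)) :=
      Finset.sum_le_sum fun j _ => mul_le_mul_of_nonneg_left (key3 j) (hppos j).le
    have step2 : ∑ j, p j * ((3/2) * ∑ i, A j i * (x i * (u i)^2)) =
        (3/2) * ∑ i, (x i * (u i)^2) * (g i + 1) := by
      calc ∑ j, p j * ((3/2) * ∑ i, A j i * (x i * (u i)^2))
          = ∑ j, ∑ i, (3/2) * (p j * (A j i * (x i * (u i)^2))) := by
            refine Finset.sum_congr rfl fun j _ => ?_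
            rw [Finset.mul_sum, Finset.mul_sum]
            exact Finset.sum_congr rfl fun i _ => by ring
        _ = ∑ i, ∑ j, (3/2) * (p j * (A j i * (x i * (u i)^2))) := Finset.sum_comm
        _ = (3/2) * ∑ i, (x i * (u i)^2) * (g i + 1) := by
            rw [Finset.mul_sum]
            refine Finset.sum_congr rfl fun i _ => ?_
            rw [← hgsum i, Finset.mul_sum, Finset.mul_sum]
            exact Finset.sum_congr rfl fun j _ => by ring
    have hμinv : 0 ≤ 2/μ := by positivity
    calc (2/μ) * ∑ j, p j * S j^2
        ≤ (2/μ) * ((3/2) * ∑ i, (x i * (u i)^2) * (g i + 1)) := by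
          rw [← step2]; exact mul_le_mul_of_nonneg_left step1 hμinv
      _ = (3/μ) * ∑ i, (x i * (u i)^2) * (g i + 1) := by
          field_simp
  have key0 : ∑ i, x' i = ∑ i, x i - ∑ i, x i * u i := by
    rw [← Finset.sum_sub_distrib]
    exact Finset.sum_congr rfl fun i _ => E1 i
  have hR : (∑ i, x i * u i) - (∑ i, (x i * u i) * (g i + 1)) +
      (3/μ) * ∑ i, (x i * (u i)^2) * (g i + 1) ≤ 0 := by
    rw [Finset.mul_sum, ← Finset.sum_sub_distrib, ← Finset.sum_add_distrib]
    apply Finset.sum_nonpos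
    intro i _
    have hpi := per_index μ α (g i) (ξt i) hμpos hα hμ5 (hcase i)
    have hui : u i = 1 - Real.exp (-(α * ξt i)) := by rw [hudef]
    rw [← hui] at hpi
    have hcore : 3/μ * (u i)^2 * (g i + 1) - u i * g i ≤ 0 := by linarith
    have hfact : x i * u i - (x i * u i) * (g i + 1) + (3/μ) * ((x i * (u i)^2) * (g i + 1)) =
        x i * (3/μ * (u i)^2 * (g i + 1) - u i * g i) := by ring
    rw [hfact]
    exact mul_nonpos_of_nonneg_of_nonpos (hx i) hcore
  -- final assembly
  have hfmu' : fmu A μ x' = -(∑ i, x i) + (∑ i, x i * u i) +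
      μ * ∑ j, Real.exp ((1/μ) * (A.mulVec x' j - 1)) := by
    unfold fmu
    rw [key0]; ring
  have hfmu : fmu A μ x = -(∑ i, x i) + μ * (∑ j, p j) := by
    unfold fmu
    rw [hpdef]
  rw [hfmu', hfmu]
  rw [key2] at key1
  linarith [key1, key4, hR]
end

section
/- Let x ∈ ℝⁿ have all entries positive and let y ∈ ℝⁿ have all entries nonnegative. Then V_x(y) = ∑_{i=1}^n (y_i log(y_i/x_i) + x_i − y_i) ≥ ∑_{i=1}^n (x_i − y_i)²/(2·max{x_i, y_i}). -/
/-- For `0 < t ≤ 1`: `(1-t)²/2 ≤ t log t + 1 - t`. -/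
lemma lemA (t : ℝ) (ht0 : 0 < t) (ht1 : t ≤ 1) :
    (1 - t) ^ 2 / 2 ≤ t * Real.log t + 1 - t := by
  set h : ℝ → ℝ := fun s => s * Real.log s + 1 - s - (1 - s) ^ 2 / 2 with hh
  have hd : ∀ s : ℝ, 0 < s → HasDerivAt h (Real.log s + 1 - s) s := by
    intro s hs
    have h1 := Real.hasDerivAt_mul_log (ne_of_gt hs)
    have h2 : HasDerivAt (fun s : ℝ => (1 - s) ^ 2 / 2)
        (2 * (1 - s) ^ 1 * (0 - 1) / 2) s :=
      (((hasDerivAt_const s (1:ℝ)).sub (hasDerivAt_id s)).pow 2).div_const 2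
    have := ((h1.add_const 1).sub (hasDerivAt_id s)).sub h2
    exact this.congr_deriv (by ring)
  have hanti : AntitoneOn h (Set.Icc t 1) := by
    apply antitoneOn_of_deriv_nonpos (convex_Icc t 1)
    · intro s hs
      exact ((hd s (lt_of_lt_of_le ht0 hs.1)).continuousAt).continuousWithinAt
    · rw [interior_Icc]
      intro s hs
      exact ((hd s (lt_trans ht0 hs.1)).differentiableAt).differentiableWithinAt
    · rw [interior_Icc]
      intro s hs
      have hs0 : 0 < s := lt_trans ht0 hs.1
      rw [(hd s hs0).deriv]
      have := Real.log_le_sub_one_of_pos hs0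
      linarith
  have key := hanti (Set.left_mem_Icc.mpr ht1) (Set.right_mem_Icc.mpr ht1) ht1
  have h1 : h 1 = 0 := by simp [hh]
  rw [h1] at key
  simp only [hh] at key
  linarith

/-- For `1 ≤ t`: `t/2 - 1 + t⁻¹/2 ≤ t log t + 1 - t`. -/
lemma lemB (t : ℝ) (ht : 1 ≤ t) :
    t / 2 - 1 + t⁻¹ / 2 ≤ t * Real.log t + 1 - t := by
  set g : ℝ → ℝ := fun s => s * Real.log s + 1 - s - s / 2 + 1 - s⁻¹ / 2 with hg
  have hd : ∀ s : ℝ, 0 < s →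
      HasDerivAt g (Real.log s - 1 / 2 + (s ^ 2)⁻¹ / 2) s := by
    intro s hs
    have h1 := Real.hasDerivAt_mul_log (ne_of_gt hs)
    have h2 : HasDerivAt (fun s : ℝ => s / 2) (1 / 2) s := by
      simpa using (hasDerivAt_id s).div_const 2
    have h3 : HasDerivAt (fun s : ℝ => s⁻¹ / 2) (-(s ^ 2)⁻¹ / 2) s :=
      (hasDerivAt_inv (ne_of_gt hs)).div_const 2
    have := ((((h1.add_const 1).sub (hasDerivAt_id s)).sub h2).add_const 1).sub h3
    exact this.congr_deriv (by ring)
  have hmono : MonotoneOn g (Set.Icc 1 t) := by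
    apply monotoneOn_of_deriv_nonneg (convex_Icc 1 t)
    · intro s hs
      exact ((hd s (lt_of_lt_of_le one_pos hs.1)).continuousAt).continuousWithinAt
    · rw [interior_Icc]
      intro s hs
      exact ((hd s (lt_trans one_pos hs.1)).differentiableAt).differentiableWithinAt
    · rw [interior_Icc]
      intro s hs
      have hs0 : (0:ℝ) < s := lt_trans one_pos hs.1
      rw [(hd s hs0).deriv]
      have hlog : 1 - s⁻¹ ≤ Real.log s := Real.one_sub_inv_le_log_of_pos hs0
      have hsq : (s ^ 2)⁻¹ = s⁻¹ * s⁻¹ := by rw [sq, mul_inv]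
      nlinarith [sq_nonneg (1 - s⁻¹)]
  have key := hmono (Set.left_mem_Icc.mpr ht) (Set.right_mem_Icc.mpr ht) ht
  have h1 : g 1 = 0 := by norm_num [hg]
  rw [h1] at key
  simp only [hg] at key
  linarith

/-- Pointwise scalar inequality. -/
lemma pointwise (a b : ℝ) (ha : 0 < a) (hb : 0 ≤ b) :
    (a - b) ^ 2 / (2 * max a b) ≤ b * Real.log (b / a) + a - b := by
  rcases eq_or_lt_of_le hb with h | hb0
  · -- b = 0
    rw [← h]
    have hmax : max a (0:ℝ) = a := max_eq_left ha.le
    rw [hmax]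
    rw [div_le_iff₀ (by linarith : (0:ℝ) < 2 * a)]
    simp
    nlinarith
  · rcases le_total b a with hab | hab
    · -- b ≤ a, max = a
      have ht0 : 0 < b / a := div_pos hb0 ha
      have ht1 : b / a ≤ 1 := (div_le_one ha).mpr hab
      have key := lemA (b / a) ht0 ht1
      have hmax : max a b = a := max_eq_left hab
      rw [hmax]
      calc (a - b) ^ 2 / (2 * a) = a * ((1 - b / a) ^ 2 / 2) := by
            field_simp <;> ring
        _ ≤ a * (b / a * Real.log (b / a) + 1 - b / a) :=
            mul_le_mul_of_nonneg_left key ha.le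
        _ = b * Real.log (b / a) + a - b := by
            field_simp <;> ring
    · -- a ≤ b, max = b
      have ht : 1 ≤ b / a := (one_le_div ha).mpr hab
      have key := lemB (b / a) ht
      have hb0' : 0 < b := lt_of_lt_of_le ha hab
      have hmax : max a b = b := max_eq_right hab
      rw [hmax]
      calc (a - b) ^ 2 / (2 * b) = a * (b / a / 2 - 1 + (b / a)⁻¹ / 2) := by
            field_simp <;> ring
        _ ≤ a * (b / a * Real.log (b / a) + 1 - b / a) :=
            mul_le_mul_of_nonneg_left key ha.le
        _ = b * Real.log (b / a) + a - b := by
            field_simp <;> ring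

/-- The Bregman divergence of the generalized entropy:
`V_x(y) = ∑ᵢ (yᵢ log(yᵢ/xᵢ) + xᵢ − yᵢ)` (with `0·log 0 = 0`, as `Real.log 0 = 0`). -/
noncomputable def bregmanV {n : ℕ} (x y : Fin n → ℝ) : ℝ :=
  ∑ i, (y i * Real.log (y i / x i) + x i - y i)

/-- for `x > 0` and `y ≥ 0` entrywise,
`V_x(y) ≥ ∑ᵢ (xᵢ − yᵢ)²/(2 max{xᵢ, yᵢ})`. -/
theorem bregman_lower_bound (n : ℕ) (x y : Fin n → ℝ)
    (hx : ∀ i, 0 < x i) (hy : ∀ i, 0 ≤ y i) :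
    (∑ i, (x i - y i) ^ 2 / (2 * max (x i) (y i))) ≤ bregmanV x y := by
  unfold bregmanV
  apply Finset.sum_le_sum
  intro i _
  exact pointwise (x i) (y i) (hx i) (hy i)
end

section
/- Let ε ∈ (0, 1/2], α ∈ (0, 1/10], and S ≥ 0. Let x ∈ ℝⁿ have all entries positive with ∑_{i=1}^n x_i ≤ (1 + ε)·S, let g ∈ ℝⁿ satisfy |g_i| ≤ 1 for every i, and define x′ ∈ ℝⁿ by x′_i = x_i·exp(−α g_i). Then for every u ∈ ℝⁿ with u ≥ 0: ⟨α g, x − u⟩ ≤ α²·S + V_x(u) − V_{x′}(u). -/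
lemma exp_quad (s : ℝ) (hs : |s| ≤ 1/10) : Real.exp s ≤ 1 + s + (2/3) * s^2 := by
  have h1 : |s| ≤ 1 := by linarith [abs_nonneg s]
  have h := Real.exp_bound h1 (n := 3) (by norm_num)
  have hsum : ∑ i ∈ Finset.range 3, s ^ i / i.factorial = 1 + s + s^2/2 := by
    simp [Finset.sum_range_succ, Nat.factorial]
  rw [hsum] at h
  have h2 := (abs_le.mp h).2
  have h3 : |s|^3 ≤ (1/10) * s^2 := by
    have he : |s|^3 = |s| * |s|^2 := by ring
    rw [he, sq_abs]
    nlinarith [abs_nonneg s, sq_nonneg s]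
  norm_num [Nat.factorial] at h2
  nlinarith [h2, h3]

/-- mirror descent guarantee. With `ε ∈ (0,1/2]`, `α ∈ (0,1/10]`, `S ≥ 0`,
`x > 0` entrywise with `∑ᵢ xᵢ ≤ (1 + ε)S`, `|gᵢ| ≤ 1` for all `i`, and `x′ᵢ = xᵢ exp(−α gᵢ)`,
for every `u ≥ 0`: `⟨α g, x − u⟩ ≤ α²S + V_x(u) − V_{x′}(u)`. -/
theorem mirror_descent_guarantee (n : ℕ)
    (ε : ℝ) (hε : ε ∈ Set.Ioc (0 : ℝ) (1 / 2))
    (α : ℝ) (hα : α ∈ Set.Ioc (0 : ℝ) (1 / 10))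
    (S : ℝ) (hS : 0 ≤ S)
    (x : Fin n → ℝ) (hx : ∀ i, 0 < x i) (hxsum : ∑ i, x i ≤ (1 + ε) * S)
    (g : Fin n → ℝ) (hg : ∀ i, |g i| ≤ 1) :
    ∀ u : Fin n → ℝ, (∀ i, 0 ≤ u i) →
      (∑ i, α * g i * (x i - u i))
        ≤ α ^ 2 * S + bregmanV x u - bregmanV (fun i => x i * Real.exp (-(α * g i))) u := by
  intro u hu
  obtain ⟨hε0, hε1⟩ := hε
  obtain ⟨hα0, hα1⟩ := hα
  have key : ∀ i, α * g i * (x i - u i)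
      ≤ (2/3) * α^2 * x i
        + ((u i * Real.log (u i / x i) + x i - u i)
          - (u i * Real.log (u i / (x i * Real.exp (-(α * g i))))
              + x i * Real.exp (-(α * g i)) - u i)) := by
    intro i
    have hxi := hx i
    set t := α * g i with ht
    have hlog : u i * Real.log (u i / (x i * Real.exp (-t)))
        = u i * Real.log (u i / x i) + u i * t := by
      rcases eq_or_lt_of_le (hu i) with h | h
      · simp [← h]
      · rw [div_mul_eq_div_div, Real.log_div (by positivity) (Real.exp_ne_zero _),
          Real.log_exp]
        ring
    rw [hlog]
    -- goal reduces to: x i * (t - 1 + exp (-t)) ≤ (2/3) * α^2 * x i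
    have habs : |(-t)| ≤ 1/10 := by
      rw [abs_neg, ht, abs_mul, abs_of_pos hα0]
      calc α * |g i| ≤ α * 1 := by nlinarith [hg i, abs_nonneg (g i)]
        _ ≤ 1/10 := by linarith
    have hexp := exp_quad (-t) habs
    have ht2 : t^2 ≤ α^2 := by
      have : |t| ≤ α := by
        rw [ht, abs_mul, abs_of_pos hα0]
        nlinarith [hg i, abs_nonneg (g i)]
      nlinarith [abs_nonneg t, sq_abs t]
    nlinarith [hexp, hxi.le, mul_le_mul_of_nonneg_left ht2 hxi.le]
  calc (∑ i, α * g i * (x i - u i))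
      ≤ ∑ i, ((2/3) * α^2 * x i
        + ((u i * Real.log (u i / x i) + x i - u i)
          - (u i * Real.log (u i / (x i * Real.exp (-(α * g i))))
              + x i * Real.exp (-(α * g i)) - u i))) :=
        Finset.sum_le_sum fun i _ => key i
    _ = (2/3) * α^2 * (∑ i, x i) + bregmanV x u
          - bregmanV (fun i => x i * Real.exp (-(α * g i))) u := by
        rw [Finset.sum_add_distrib, Finset.sum_sub_distrib, ← Finset.mul_sum]
        simp [bregmanV]
        ring
    _ ≤ α ^ 2 * S + bregmanV x u - bregmanV (fun i => x i * Real.exp (-(α * g i))) u := by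
        have h1 : (2/3) * α^2 * (∑ i, x i) ≤ (2/3) * α^2 * ((1+ε) * S) := by
          have : 0 ≤ (2/3) * α^2 := by positivity
          exact mul_le_mul_of_nonneg_left hxsum this
        have h2 : (0:ℝ) ≤ α^2 * S * (1/2 - ε) :=
          mul_nonneg (mul_nonneg (sq_nonneg α) hS) (by linarith)
        nlinarith [h1, h2]
end

section
/- Let A be an m×n matrix with nonnegative real entries, n ≥ 2, such that ‖A_{:i}‖_∞ ≥ 1 for every column i, and let ε ∈ (0, 1/2]. Define x₀ ∈ ℝⁿ by x₀[i] = (1 − ε/2)/(n·‖A_{:i}‖_∞). Let u ∈ ℝⁿ satisfy u ≥ 0, Au ≤ 1, and ∑_i u_i ≤ opt, where opt ≥ 1. Then V_{x₀}(u) ≤ 2·log(2n)·opt. -/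
/-- with `n ≥ 2`, `‖A_{:i}‖_∞ ≥ 1` for all columns, `ε ∈ (0,1/2]`,
`x₀[i] = (1 − ε/2)/(n‖A_{:i}‖_∞)`, and `u ≥ 0` with `Au ≤ 1` and `∑ᵢ uᵢ ≤ opt` where
`opt ≥ 1`: `V_{x₀}(u) ≤ 2 log(2n) opt`. -/
theorem bregman_initial_bound (m n : ℕ) (hm : 0 < m) (hn : 2 ≤ n)
    (A : Matrix (Fin m) (Fin n) ℝ) (hA : ∀ j i, 0 ≤ A j i)
    (hcol : ∀ i, 1 ≤ colMax hm A i)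
    (ε : ℝ) (hε : ε ∈ Set.Ioc (0 : ℝ) (1 / 2))
    (u : Fin n → ℝ) (hu : ∀ i, 0 ≤ u i) (hufeas : ∀ j, A.mulVec u j ≤ 1)
    (opt : ℝ) (hopt1 : 1 ≤ opt) (husum : ∑ i, u i ≤ opt) :
    bregmanV (fun i => (1 - ε / 2) / ((n : ℝ) * colMax hm A i)) u
      ≤ 2 * Real.log (2 * n) * opt := by
  obtain ⟨hε0, hε2⟩ := hε
  set c := colMax hm A with hcdef
  have hc1 : ∀ i, 1 ≤ c i := hcol
  have hcpos : ∀ i, 0 < c i := fun i => lt_of_lt_of_le zero_lt_one (hc1 i)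
  have hn' : (2 : ℝ) ≤ (n : ℝ) := by exact_mod_cast hn
  have hnpos : (0 : ℝ) < n := by linarith
  have heps : (0 : ℝ) < 1 - ε / 2 := by linarith
  set x : Fin n → ℝ := fun i => (1 - ε / 2) / ((n : ℝ) * c i) with hxdef
  have hxpos : ∀ i, 0 < x i := fun i => div_pos heps (mul_pos hnpos (hcpos i))
  -- u i ≤ 1 / c i
  have hux : ∀ i, u i ≤ 1 / c i := by
    intro i
    obtain ⟨j, -, hj⟩ := Finset.exists_mem_eq_sup' (⟨⟨0, hm⟩, Finset.mem_univ _⟩ :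
      (Finset.univ : Finset (Fin m)).Nonempty) (fun j : Fin m => A j i)
    have hterm : A j i * u i ≤ ∑ k, A j k * u k :=
      Finset.single_le_sum (fun k _ => mul_nonneg (hA j k) (hu k)) (Finset.mem_univ i)
    have hfeas := hufeas j
    rw [Matrix.mulVec, dotProduct] at hfeas
    have hciu : c i * u i ≤ 1 := by
      have : c i = A j i := hj
      rw [this]; exact le_trans hterm hfeas
    rw [le_div_iff₀ (hcpos i)]
    linarith [mul_comm (c i) (u i) ▸ hciu]
  -- ratio bound
  have hratio : ∀ i, u i / x i ≤ 2 * n := by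
    intro i
    rw [div_le_iff₀ (hxpos i)]
    have h1 : u i ≤ (2 - ε) / c i := by
      refine le_trans (hux i) ?_
      rw [div_le_div_iff₀ (hcpos i) (hcpos i)]
      nlinarith [hcpos i]
    have hn0 : (n : ℝ) ≠ 0 := ne_of_gt hnpos
    have hc0 : c i ≠ 0 := ne_of_gt (hcpos i)
    have heq : 2 * (n : ℝ) * x i = (2 - ε) / c i := by
      simp only [hxdef]
      field_simp
    rw [heq]; exact h1
  -- 1 ≤ log (2n)
  have h2npos : (0 : ℝ) < 2 * n := by linarith
  have hlog1 : 1 ≤ Real.log (2 * n) := by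
    rw [Real.le_log_iff_exp_le h2npos]
    have := Real.exp_one_lt_d9
    linarith
  have hlog0 : 0 ≤ Real.log (2 * n) := by linarith
  -- termwise bound
  have hterm : ∀ i, u i * Real.log (u i / x i) + x i - u i
      ≤ u i * Real.log (2 * n) + x i := by
    intro i
    have hmul : u i * Real.log (u i / x i) ≤ u i * Real.log (2 * n) := by
      rcases eq_or_lt_of_le (hu i) with h0 | h0
      · rw [← h0]; simp
      · refine mul_le_mul_of_nonneg_left ?_ (hu i)
        exact Real.log_le_log (div_pos h0 (hxpos i)) (hratio i)
    linarith [hu i]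
  -- sum
  have hxsum : ∑ i, x i ≤ 1 := by
    have : ∀ i, x i ≤ 1 / n := by
      intro i
      rw [hxdef]
      rw [div_le_div_iff₀ (mul_pos hnpos (hcpos i)) hnpos]
      have := hc1 i
      nlinarith
    calc ∑ i, x i ≤ ∑ _i : Fin n, (1 / (n : ℝ)) := Finset.sum_le_sum (fun i _ => this i)
      _ = 1 := by
        rw [Finset.sum_const, Finset.card_univ, Fintype.card_fin, nsmul_eq_mul]
        field_simp
  have hV : bregmanV x u ≤ Real.log (2 * n) * (∑ i, u i) + ∑ i, x i := by
    rw [bregmanV, Finset.mul_sum, ← Finset.sum_add_distrib]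
    refine Finset.sum_le_sum (fun i _ => ?_)
    have := hterm i
    linarith [mul_comm (u i) (Real.log (2 * n))]
  have husum' : Real.log (2 * n) * (∑ i, u i) ≤ Real.log (2 * n) * opt :=
    mul_le_mul_of_nonneg_left husum hlog0
  have hfin : Real.log (2 * n) * opt + 1 ≤ 2 * Real.log (2 * n) * opt := by
    nlinarith
  calc bregmanV x u ≤ Real.log (2 * n) * (∑ i, u i) + ∑ i, x i := hV
    _ ≤ Real.log (2 * n) * opt + 1 := by linarith
    _ ≤ 2 * Real.log (2 * n) * opt := hfin
end

section
/- Let A be an m×n matrix with nonnegative real entries such that every column has a positive maximum entry, and let ε ∈ (0, 1/10]. Let ȳ ∈ ℝᵐ with ȳ ≥ 0. For each i ∈ {1, …, n} let λ_i = (Aᵀȳ)_i − 1 + ε, and let j(i) be a row index with A_{j(i), i} = ‖A_{:i}‖_∞. Define ȳ′ = ȳ + ∑_{i : λ_i ≤ −2ε} (−λ_i / A_{j(i), i})·e_{j(i)}, where e_j denotes the j-th standard basis vector of ℝᵐ. Then ȳ′ ≥ 0 and (Aᵀȳ′)_i ≥ 1 − 3ε for every i; consequently y = ȳ′/(1 −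 3ε) satisfies y ≥ 0 and Aᵀy ≥ 1. -/
/-- correctness of the feasibility-fixing procedure for the covering LP.
With every column max positive, `ε ∈ (0,1/10]`, `ȳ ≥ 0`, `λᵢ = (Aᵀȳ)ᵢ − 1 + ε`, `j(i)` a row
achieving the column max, and `ȳ′ = ȳ + ∑_{i : λᵢ ≤ −2ε} (−λᵢ/A_{j(i),i})·e_{j(i)}`, one has
`ȳ′ ≥ 0`, `(Aᵀȳ′)ᵢ ≥ 1 − 3ε` for all `i`, and `y = ȳ′/(1 − 3ε)` satisfies `y ≥ 0`, `Aᵀy ≥ 1`. -/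
theorem fixing_procedure (m n : ℕ) (hm : 0 < m) (hn : 0 < n)
    (A : Matrix (Fin m) (Fin n) ℝ) (hA : ∀ j i, 0 ≤ A j i)
    (hcolpos : ∀ i, 0 < colMax hm A i)
    (ε : ℝ) (hε : ε ∈ Set.Ioc (0 : ℝ) (1 / 10))
    (ybar : Fin m → ℝ) (hybar : ∀ j, 0 ≤ ybar j)
    (lam : Fin n → ℝ) (hlam : ∀ i, lam i = A.transpose.mulVec ybar i - 1 + ε)
    (jfun : Fin n → Fin m) (hjfun : ∀ i, A (jfun i) i = colMax hm A i)
    (ybar' : Fin m → ℝ)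
    (hybar' : ∀ j, ybar' j = ybar j +
      ∑ i ∈ Finset.univ.filter (fun i : Fin n => lam i ≤ -(2 * ε)),
        (if j = jfun i then -lam i / A (jfun i) i else 0)) :
    (∀ j, 0 ≤ ybar' j) ∧
    (∀ i, 1 - 3 * ε ≤ A.transpose.mulVec ybar' i) ∧
    (∀ j, 0 ≤ ybar' j / (1 - 3 * ε)) ∧
    (∀ i, 1 ≤ A.transpose.mulVec (fun j => ybar' j / (1 - 3 * ε)) i) := by
  obtain ⟨hε0, hε1⟩ := hε
  have h3 : 0 < 1 - 3 * ε := by linarith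
  have hApos : ∀ i, 0 < A (jfun i) i := fun i => (hjfun i) ▸ hcolpos i
  have hterm : ∀ i : Fin n, lam i ≤ -(2 * ε) → 0 ≤ -lam i / A (jfun i) i := fun i hi =>
    div_nonneg (by linarith) (hApos i).le
  have h1 : ∀ j, 0 ≤ ybar' j := by
    intro j
    rw [hybar' j]
    have hs : 0 ≤ ∑ i ∈ Finset.univ.filter (fun i : Fin n => lam i ≤ -(2 * ε)),
        (if j = jfun i then -lam i / A (jfun i) i else 0) := by
      apply Finset.sum_nonneg
      intro i hi
      rw [Finset.mem_filter] at hi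
      split
      · exact hterm i hi.2
      · exact le_refl 0
    linarith [hybar j]
  have hmul : ∀ i, A.transpose.mulVec ybar' i = A.transpose.mulVec ybar i +
      ∑ k ∈ Finset.univ.filter (fun k : Fin n => lam k ≤ -(2 * ε)),
        A (jfun k) i * (-lam k / A (jfun k) k) := by
    intro i
    simp only [Matrix.mulVec, Matrix.transpose_apply, dotProduct]
    have : ∀ j, ybar' j = ybar j + ∑ k ∈ Finset.univ.filter (fun k : Fin n => lam k ≤ -(2 * ε)),
        (if j = jfun k then -lam k / A (jfun k) k else 0) := hybar'
    calc ∑ j, A j i * ybar' j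
        = ∑ j, (A j i * ybar j + ∑ k ∈ Finset.univ.filter (fun k : Fin n => lam k ≤ -(2 * ε)),
            (if j = jfun k then A j i * (-lam k / A (jfun k) k) else 0)) := by
          apply Finset.sum_congr rfl
          intro j _
          rw [this j, mul_add, Finset.mul_sum]
          congr 1
          apply Finset.sum_congr rfl
          intro k _
          split <;> simp
      _ = ∑ j, A j i * ybar j + ∑ j : Fin m, ∑ k ∈ Finset.univ.filter
            (fun k : Fin n => lam k ≤ -(2 * ε)),
            (if j = jfun k then A j i * (-lam k / A (jfun k) k) else 0) := by
          rw [Finset.sum_add_distrib]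
      _ = ∑ j, A j i * ybar j + ∑ k ∈ Finset.univ.filter
            (fun k : Fin n => lam k ≤ -(2 * ε)),
            A (jfun k) i * (-lam k / A (jfun k) k) := by
          rw [Finset.sum_comm]
          congr 1
          apply Finset.sum_congr rfl
          intro k _
          rw [Finset.sum_ite_eq' Finset.univ (jfun k)
            (fun j => A j i * (-lam k / A (jfun k) k))]
          simp
  have h2 : ∀ i, 1 - 3 * ε ≤ A.transpose.mulVec ybar' i := by
    intro i
    rw [hmul i]
    have hAy : A.transpose.mulVec ybar i = 1 - ε + lam i := by
      have := hlam i; linarith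
    by_cases hi : lam i ≤ -(2 * ε)
    · have hmem : i ∈ Finset.univ.filter (fun k : Fin n => lam k ≤ -(2 * ε)) := by
        simp [hi]
      have hsum : -lam i ≤ ∑ k ∈ Finset.univ.filter
          (fun k : Fin n => lam k ≤ -(2 * ε)), A (jfun k) i * (-lam k / A (jfun k) k) := by
        have hle := Finset.single_le_sum (f := fun k => A (jfun k) i * (-lam k / A (jfun k) k))
          (fun k hk => mul_nonneg (hA _ _) (hterm k (Finset.mem_filter.mp hk).2)) hmem
        have heq : A (jfun i) i * (-lam i / A (jfun i) i) = -lam i := by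
          rw [mul_comm]; exact div_mul_cancel₀ _ (hApos i).ne'
        rw [heq] at hle
        exact hle
      linarith
    · have hsum : 0 ≤ ∑ k ∈ Finset.univ.filter
          (fun k : Fin n => lam k ≤ -(2 * ε)), A (jfun k) i * (-lam k / A (jfun k) k) :=
        Finset.sum_nonneg fun k hk => mul_nonneg (hA _ _) (hterm k (Finset.mem_filter.mp hk).2)
      push_neg at hi
      linarith
  refine ⟨h1, h2, fun j => div_nonneg (h1 j) h3.le, fun i => ?_⟩
  have hdiv : A.transpose.mulVec (fun j => ybar' j / (1 - 3 * ε)) i =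
      A.transpose.mulVec ybar' i / (1 - 3 * ε) := by
    simp only [Matrix.mulVec, Matrix.transpose_apply, dotProduct]
    rw [Finset.sum_div]
    exact Finset.sum_congr rfl fun j _ => (mul_div_assoc _ _ _).symm
  rw [hdiv, le_div_iff₀ h3, one_mul]
  exact h2 i
end
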